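/- arXiv:1703.01955 — 6 statements merged into one kernel-verified Lean document; each statement's English description precedes it below -/
import Mathlib

section
/- For every nonzero integer k, the set {n ∈ ℕ : t_2(n) = k} is infinite; in particular the set of values of the sequence (t_2(n))_{n∈ℕ} is exactly ℤ \ {0}. -/
/-- The generating function `T(x) = ∑ (-1)^{s₂(n)} xⁿ = ∏ (1 - x^{2^j})`
of the Prouhet–Thue–Morse sequence. -/
noncomputable def T : PowerSeries ℤ :=
  PowerSeries.mk fun n => (-1) ^ (Nat.digits 2 n).sum

/-- The sign `(-1)^{s₂(n)}`. -/
def sgn (n : ℕ) : ℤ := (-1) ^ (Nat.digits 2 n).sum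

/-- `t n` is the coefficient of `xⁿ` in `T²`. -/
noncomputable def tt (n : ℕ) : ℤ := PowerSeries.coeff n (T ^ 2)

lemma sgn_zero : sgn 0 = 1 := by simp [sgn]

lemma sgn_two_mul (n : ℕ) : sgn (2 * n) = sgn n := by
  rcases Nat.eq_zero_or_pos n with rfl | hn
  · norm_num
  · unfold sgn
    rw [Nat.digits_def' (by norm_num : 1 < 2) (by omega : 0 < 2 * n)]
    have h1 : 2 * n % 2 = 0 := by omega
    have h2 : 2 * n / 2 = n := by omega
    rw [h1, h2, List.sum_cons]
    norm_num

lemma sgn_two_mul_add_one (n : ℕ) : sgn (2 * n + 1) = -sgn n := by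
  unfold sgn
  rw [Nat.digits_def' (by norm_num : 1 < 2) (by omega : 0 < 2 * n + 1)]
  have h1 : (2 * n + 1) % 2 = 1 := by omega
  have h2 : (2 * n + 1) / 2 = n := by omega
  rw [h1, h2, List.sum_cons, pow_add]
  ring

lemma tt_eq (n : ℕ) : tt n = ∑ i ∈ Finset.range (n + 1), sgn i * sgn (n - i) := by
  rw [tt, sq, PowerSeries.coeff_mul, Finset.Nat.sum_antidiagonal_eq_sum_range_succ_mk]
  simp only [T, PowerSeries.coeff_mk, sgn]

lemma sum_range_even_odd (g : ℕ → ℤ) (m : ℕ) :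
    ∑ i ∈ Finset.range (2 * m), g i = ∑ u ∈ Finset.range m, (g (2 * u) + g (2 * u + 1)) := by
  induction m with
  | zero => simp
  | succ k ih =>
    have h : 2 * (k + 1) = 2 * k + 1 + 1 := by ring
    rw [h, Finset.sum_range_succ, Finset.sum_range_succ, ih, Finset.sum_range_succ]
    ring

lemma tt_zero : tt 0 = 1 := by
  rw [tt_eq]
  simp [sgn_zero]

lemma tt_odd (n : ℕ) : tt (2 * n + 1) = -2 * tt n := by
  rw [tt_eq, tt_eq]
  have h1 : 2 * n + 1 + 1 = 2 * (n + 1) := by ring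
  rw [h1, sum_range_even_odd, Finset.mul_sum]
  apply Finset.sum_congr rfl
  intro u hu
  have hu' : u ≤ n := by
    have := Finset.mem_range.mp hu; omega
  have e1 : 2 * n + 1 - 2 * u = 2 * (n - u) + 1 := by omega
  have e2 : 2 * n + 1 - (2 * u + 1) = 2 * (n - u) := by omega
  rw [e1, e2, sgn_two_mul, sgn_two_mul, sgn_two_mul_add_one, sgn_two_mul_add_one]
  ring

lemma tt_even (n : ℕ) : tt (2 * n + 2) = tt (n + 1) + tt n := by
  rw [tt_eq]
  have h1 : 2 * n + 2 + 1 = 2 * (n + 1) + 1 := by ring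
  rw [h1, Finset.sum_range_succ, sum_range_even_odd]
  have key : ∑ u ∈ Finset.range (n + 1),
      (sgn (2 * u) * sgn (2 * n + 2 - 2 * u) + sgn (2 * u + 1) * sgn (2 * n + 2 - (2 * u + 1)))
      = ∑ u ∈ Finset.range (n + 1), (sgn u * sgn (n + 1 - u) + sgn u * sgn (n - u)) := by
    apply Finset.sum_congr rfl
    intro u hu
    have hu' : u ≤ n := by
      have := Finset.mem_range.mp hu; omega
    have e1 : 2 * n + 2 - 2 * u = 2 * (n + 1 - u) := by omega
    have e2 : 2 * n + 2 - (2 * u + 1) = 2 * (n - u) + 1 := by omega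
    rw [e1, e2, sgn_two_mul, sgn_two_mul, sgn_two_mul_add_one, sgn_two_mul_add_one]
    ring
  rw [key, Finset.sum_add_distrib]
  have e3 : 2 * n + 2 - 2 * (n + 1) = 0 := by omega
  rw [e3, sgn_two_mul, sgn_zero, mul_one]
  have e4 : n + 1 - (n + 1) = 0 := by omega
  have hA : ∑ i ∈ Finset.range (n + 1 + 1), sgn i * sgn (n + 1 - i)
      = ∑ i ∈ Finset.range (n + 1), sgn i * sgn (n + 1 - i) + sgn (n + 1) := by
    rw [Finset.sum_range_succ, e4, sgn_zero, mul_one]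
  rw [tt_eq, tt_eq, hA]
  ring

lemma tt_one : tt 1 = -2 := by
  have h := tt_odd 0
  norm_num at h
  rw [h, tt_zero]
  norm_num

/-- `tt` of an even index is odd. -/
lemma tt_even_index_odd : ∀ n : ℕ, Odd (tt (2 * n)) := by
  intro n
  induction n using Nat.strong_induction_on with
  | _ n ih =>
    match n with
    | 0 => exact ⟨0, by rw [tt_zero]; ring⟩
    | Nat.succ m =>
      have h : 2 * (m + 1) = 2 * m + 2 := by ring
      rw [h, tt_even]
      rcases Nat.even_or_odd m with ⟨i, hi⟩ | ⟨i, hi⟩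
      · -- m = i + i, so tt m odd, tt (m+1) even
        have hm : m = 2 * i := by omega
        have h1 : Odd (tt m) := by rw [hm]; exact ih i (by omega)
        have h2 : Even (tt (m + 1)) := by
          have : m + 1 = 2 * i + 1 := by omega
          rw [this, tt_odd]
          exact ⟨-tt i, by ring⟩
        exact h2.add_odd h1
      · -- m = 2i+1, so tt m even, tt (m+1) odd
        have h1 : Even (tt m) := by
          rw [hi, tt_odd]
          exact ⟨-tt i, by ring⟩
        have h2 : Odd (tt (m + 1)) := by
          have : m + 1 = 2 * (i + 1) := by omega
          rw [this]
          exact ih (i + 1) (by omega)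
        exact h2.add_even h1

lemma tt_ne_zero : ∀ n : ℕ, tt n ≠ 0 := by
  intro n
  induction n using Nat.strong_induction_on with
  | _ n ih =>
    rcases Nat.even_or_odd n with ⟨i, hi⟩ | ⟨i, hi⟩
    · have hn : n = 2 * i := by omega
      have := tt_even_index_odd i
      rw [← hn] at this
      rintro h0
      rw [h0] at this
      exact (by norm_num : ¬ Odd (0 : ℤ)) this
    · rw [hi, tt_odd]
      have := ih i (by omega)
      intro h0
      apply this
      linarith [h0]

/-- Measure for the descent. -/
def mu (a b : ℤ) : ℕ :=
  2 * (a.natAbs + b.natAbs) + (if (0 < a ∧ 0 < b) ∨ (a < 0 ∧ b < 0) then 1 else 0)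

lemma mu_L {b c : ℤ} (hc : c ≠ 0) (hb : b ≠ 0) : mu (-c) (b + c) < mu (c + c) b := by
  unfold mu
  split_ifs <;> omega

lemma mu_R {a c : ℤ} (hc : c ≠ 0) (ha : a ≠ 0) : mu (a + c) (-c) < mu a (c + c) := by
  unfold mu
  split_ifs <;> omega

/-- Every admissible pair occurs as a pair of consecutive values of `tt`. -/
lemma pair_exists : ∀ (N : ℕ) (a b : ℤ), mu a b ≤ N → a ≠ 0 → b ≠ 0 → IsCoprime a b →
    (3 * a + b) % 8 = 1 → ∃ r : ℕ, tt r = a ∧ tt (r + 1) = b := by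
  intro N
  induction N using Nat.strong_induction_on with
  | _ N ih =>
  intro a b hN ha hb hcop hmod
  by_cases hbase : a = 1 ∧ b = -2
  · refine ⟨0, ?_, ?_⟩
    · rw [tt_zero, hbase.1]
    · rw [tt_one, hbase.2]
  rcases Int.even_or_odd a with ⟨c, hc2⟩ | ⟨k0, hk0⟩
  · -- a = c + c : L-case, predecessor (-c, b + c)
    subst hc2
    have hc : c ≠ 0 := by intro h; apply ha; omega
    have hb1 : b + c ≠ 0 := by
      intro h0
      obtain ⟨u, v, huv⟩ := hcop
      have hdvd : c * (2 * u - v) = 1 := by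
        have hb' : b = -c := by omega
        rw [hb'] at huv
        linear_combination huv
      have hunit : IsUnit c := IsUnit.of_mul_eq_one _ hdvd
      rcases Int.isUnit_iff.mp hunit with h1 | h1 <;> omega
    have hcop' : IsCoprime (-c) (b + c) := by
      obtain ⟨u, v, huv⟩ := hcop
      exact ⟨v - 2 * u, v, by linear_combination huv⟩
    have hmod' : (3 * (-c) + (b + c)) % 8 = 1 := by omega
    obtain ⟨r, h1, h2⟩ := ih (mu (-c) (b + c)) (lt_of_lt_of_le (mu_L hc hb) hN)
      (-c) (b + c) le_rfl (neg_ne_zero.mpr hc) hb1 hcop' hmod'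
    refine ⟨2 * r + 1, ?_, ?_⟩
    · rw [tt_odd, h1]; ring
    · have e : 2 * r + 1 + 1 = 2 * r + 2 := by ring
      rw [e, tt_even, h1, h2]; ring
  · -- a odd, so b is even : R-case, predecessor (a + c, -c)
    have hbev : b % 2 = 0 := by omega
    have : ∃ c : ℤ, b = c + c := ⟨b / 2, by omega⟩
    obtain ⟨c, hc2⟩ := this
    subst hc2
    have hc : c ≠ 0 := by intro h; apply hb; omega
    have ha1 : a + c ≠ 0 := by
      intro h0
      obtain ⟨u, v, huv⟩ := hcop
      have hdvd : c * (2 * v - u) = 1 := by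
        have ha' : a = -c := by omega
        rw [ha'] at huv
        linear_combination huv
      have hunit : IsUnit c := IsUnit.of_mul_eq_one _ hdvd
      rcases Int.isUnit_iff.mp hunit with h1 | h1
      · omega
      · exact hbase ⟨by omega, by omega⟩
    have hcop' : IsCoprime (a + c) (-c) := by
      obtain ⟨u, v, huv⟩ := hcop
      exact ⟨u, u - 2 * v, by linear_combination huv⟩
    have hmod' : (3 * (a + c) + -c) % 8 = 1 := by omega
    obtain ⟨r, h1, h2⟩ := ih (mu (a + c) (-c)) (lt_of_lt_of_le (mu_R hc ha) hN)
      (a + c) (-c) le_rfl ha1 (neg_ne_zero.mpr hc) hcop' hmod'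
    refine ⟨2 * r + 2, ?_, ?_⟩
    · rw [tt_even, h1, h2]; ring
    · have e : 2 * r + 2 + 1 = 2 * (r + 1) + 1 := by ring
      rw [e, tt_odd, h2]; ring

lemma main1 (k : ℤ) (hk : k ≠ 0) : {n : ℕ | tt n = k}.Infinite := by
  have H : ∀ j : ℕ, ∃ r : ℕ, tt r = k ∧ tt (r + 1) = 1 + k * (8 * (j : ℤ) + 5) := by
    intro j
    apply pair_exists (mu k (1 + k * (8 * (j : ℤ) + 5))) k _ le_rfl hk
    · -- b ≠ 0
      intro h0
      have hm : k * (8 * (j : ℤ) + 5) = -1 := by linarith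
      have h2 : k.natAbs * (8 * (j : ℤ) + 5).natAbs = 1 := by
        rw [← Int.natAbs_mul, hm]
        rfl
      have h3 : (8 * (j : ℤ) + 5).natAbs = 8 * j + 5 := by omega
      rw [h3] at h2
      have hd : (8 * j + 5) ≤ 1 :=
        Nat.le_of_dvd one_pos ⟨k.natAbs, by rw [mul_comm] at h2; exact h2.symm⟩
      omega
    · exact ⟨-(8 * (j : ℤ) + 5), 1, by ring⟩
    · have h : 3 * k + (1 + k * (8 * (j : ℤ) + 5)) = 8 * (k * ((j : ℤ) + 1)) + 1 := by ring
      rw [h]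
      omega
  choose f hf using H
  apply Set.infinite_of_injective_forall_mem (f := f)
  · intro i j hij
    have h1 : 1 + k * (8 * (i : ℤ) + 5) = 1 + k * (8 * (j : ℤ) + 5) := by
      rw [← (hf i).2, ← (hf j).2, hij]
    have h2 : (8 * (i : ℤ) + 5) = (8 * (j : ℤ) + 5) :=
      mul_left_cancel₀ hk (by linarith)
    omega
  · exact fun j => (hf j).1

theorem stmt12 :
    (∀ k : ℤ, k ≠ 0 → {n : ℕ | PowerSeries.coeff n (T ^ 2) = k}.Infinite) ∧
    Set.range (fun n : ℕ => PowerSeries.coeff n (T ^ 2)) = {k : ℤ | k ≠ 0} := by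
  constructor
  · intro k hk
    exact main1 k hk
  · ext k
    simp only [Set.mem_range, Set.mem_setOf_eq]
    constructor
    · rintro ⟨n, rfl⟩
      exact tt_ne_zero n
    · intro hk
      obtain ⟨n, hn⟩ := (main1 k hk).nonempty
      exact ⟨n, hn⟩
end

section
/- For every n ∈ ℕ₊ one has 2·|t_2(n)| ≥ |t_2(n-1) + t_2(n+1)|, and equality holds whenever n is even. -/
namespace Stmt13Aux

open PowerSeries

/-- The Thue–Morse sign. -/
def s (n : ℕ) : ℤ := (-1) ^ (Nat.digits 2 n).sum

lemma coeff_T (n : ℕ) : PowerSeries.coeff (R := ℤ) n T = s n := by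
  simp [T, s, PowerSeries.coeff_mk]

lemma s_zero : s 0 = 1 := by simp [s]

lemma s_even (n : ℕ) : s (2 * n) = s n := by
  rcases Nat.eq_zero_or_pos n with h | h
  · simp [h]
  · have : Nat.digits 2 (2 * n) = 0 :: Nat.digits 2 n := by
      rw [Nat.digits_def' (by norm_num) (by omega)]
      congr 1
      · omega
      · congr 1; omega
    simp [s, this]

lemma s_odd (n : ℕ) : s (2 * n + 1) = -s n := by
  have : Nat.digits 2 (2 * n + 1) = 1 :: Nat.digits 2 n := by
    rw [Nat.digits_def' (by norm_num) (by omega)]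
    congr 1
    · omega
    · congr 1; omega
  unfold s
  rw [this, List.sum_cons, pow_add]
  norm_num

/-- "T(x²)". -/
noncomputable def S : PowerSeries ℤ :=
  PowerSeries.mk fun n => if Even n then s (n / 2) else 0

lemma T_eq : T = (1 - PowerSeries.X) * S := by
  ext n
  rw [sub_mul, one_mul, map_sub]
  cases n with
  | zero =>
    simp [coeff_T, S, PowerSeries.coeff_mk, PowerSeries.coeff_zero_X_mul, s_zero]
  | succ m =>
    rw [PowerSeries.coeff_succ_X_mul]
    rcases Nat.even_or_odd m with ⟨k, hk⟩ | ⟨k, hk⟩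
    · -- m = 2k, so m+1 = 2k+1 odd
      subst hk
      have h1 : ¬ Even (k + k + 1) := by simp [Nat.even_add_one, Nat.even_add]
      have h2 : Even (k + k) := ⟨k, rfl⟩
      simp only [coeff_T, S, PowerSeries.coeff_mk, if_neg h1, if_pos h2]
      have : k + k + 1 = 2 * k + 1 := by ring
      rw [this, s_odd]
      have : (k + k) / 2 = k := by omega
      rw [this]; ring
    · -- m = 2k+1, so m+1 = 2k+2 even
      subst hk
      have h1 : Even (2 * k + 1 + 1) := ⟨k + 1, by ring⟩
      have h2 : ¬ Even (2 * k + 1) := by simp [Nat.even_add_one]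
      simp only [coeff_T, S, PowerSeries.coeff_mk, if_pos h1, if_neg h2]
      have : 2 * k + 1 + 1 = 2 * (k + 1) := by ring
      rw [this, s_even]
      have : 2 * (k + 1) / 2 = k + 1 := by omega
      rw [this]; ring

lemma coeff_SS_odd (k : ℕ) : PowerSeries.coeff (R := ℤ) (2 * k + 1) (S * S) = 0 := by
  rw [PowerSeries.coeff_mul]
  apply Finset.sum_eq_zero
  rintro ⟨i, j⟩ hij
  rw [Finset.HasAntidiagonal.mem_antidiagonal] at hij
  simp only [S, PowerSeries.coeff_mk]
  rcases Nat.even_or_odd i with hi | hi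
  · have hj : ¬ Even j := by
      intro hj
      have : Even (2 * k + 1) := by rw [← hij]; exact hi.add hj
      rcases this with ⟨c, hc⟩
      omega
    rw [if_neg hj, mul_zero]
  · rw [if_neg (Nat.not_even_iff_odd.mpr hi), zero_mul]

lemma coeff_SS_even (k : ℕ) :
    PowerSeries.coeff (R := ℤ) (2 * k) (S * S) = PowerSeries.coeff (R := ℤ) k (T * T) := by
  rw [PowerSeries.coeff_mul, PowerSeries.coeff_mul]
  rw [← Finset.sum_filter_of_ne (p := fun p : ℕ × ℕ => Even p.1)]
  · refine Finset.sum_nbij' (fun p => (p.1 / 2, p.2 / 2)) (fun p => (2 * p.1, 2 * p.2))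
      ?_ ?_ ?_ ?_ ?_
    · rintro ⟨i, j⟩ hp
      simp only [Finset.mem_filter, Finset.HasAntidiagonal.mem_antidiagonal] at hp
      obtain ⟨hij, hi⟩ := hp
      obtain ⟨a, ha⟩ := hi
      rw [Finset.HasAntidiagonal.mem_antidiagonal]
      simp only
      omega
    · rintro ⟨a, b⟩ hp
      rw [Finset.HasAntidiagonal.mem_antidiagonal] at hp
      simp only [Finset.mem_filter, Finset.HasAntidiagonal.mem_antidiagonal]
      constructor
      · omega
      · exact ⟨a, by omega⟩
    · rintro ⟨i, j⟩ hp
      simp only [Finset.mem_filter, Finset.HasAntidiagonal.mem_antidiagonal] at hp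
      obtain ⟨hij, a, ha⟩ := hp
      simp only [Prod.mk.injEq]
      omega
    · rintro ⟨a, b⟩ _
      simp only [Prod.mk.injEq]
      omega
    · rintro ⟨i, j⟩ hp
      simp only [Finset.mem_filter, Finset.HasAntidiagonal.mem_antidiagonal] at hp
      obtain ⟨hij, a, ha⟩ := hp
      have hi : Even i := ⟨a, ha⟩
      have hj : Even j := by
        obtain ⟨b, hb⟩ : ∃ b, j = 2 * b := ⟨k - a, by omega⟩
        exact ⟨b, by omega⟩
      simp only [S, PowerSeries.coeff_mk, if_pos hi, if_pos hj, coeff_T]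
  · rintro ⟨i, j⟩ _ hne
    by_contra hi
    exact hne (by simp [S, PowerSeries.coeff_mk, if_neg hi])

noncomputable def u (n : ℕ) : ℤ := PowerSeries.coeff (R := ℤ) n (T ^ 2)

lemma coeff_expand (n : ℕ) :
    PowerSeries.coeff (R := ℤ) n (T ^ 2) =
      PowerSeries.coeff (R := ℤ) n (S * S)
        - (PowerSeries.coeff (R := ℤ) n (PowerSeries.X * (S * S))
            + PowerSeries.coeff (R := ℤ) n (PowerSeries.X * (S * S)))
        + PowerSeries.coeff (R := ℤ) n (PowerSeries.X ^ 2 * (S * S)) := by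
  have h : T ^ 2 = S * S - (PowerSeries.X * (S * S) + PowerSeries.X * (S * S))
      + PowerSeries.X ^ 2 * (S * S) := by
    rw [T_eq]; ring
  rw [h, map_add, map_sub, map_add]

lemma u_zero : u 0 = 1 := by
  have : PowerSeries.coeff (R := ℤ) 0 (T ^ 2) = 1 := by
    rw [pow_two, PowerSeries.coeff_mul]
    simp [coeff_T, s_zero]
  exact this

lemma u_odd (k : ℕ) : u (2 * k + 1) = -2 * u k := by
  unfold u
  rw [coeff_expand, coeff_SS_odd, PowerSeries.coeff_succ_X_mul]
  have h2k : PowerSeries.coeff (R := ℤ) (2 * k) (S * S) = PowerSeries.coeff (R := ℤ) k (T ^ 2) := by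
    rw [coeff_SS_even, pow_two]
  rw [h2k, PowerSeries.coeff_X_pow_mul']
  rcases Nat.eq_zero_or_pos k with h0 | h1
  · subst h0
    rw [if_neg (by omega)]
    ring
  · rw [if_pos (by omega)]
    have e : 2 * k + 1 - 2 = 2 * (k - 1) + 1 := by omega
    rw [e, coeff_SS_odd]
    ring

lemma u_even (k : ℕ) : u (2 * k + 2) = u (k + 1) + u k := by
  unfold u
  rw [coeff_expand]
  have e1 : 2 * k + 2 = 2 * (k + 1) := by ring
  have h1 : PowerSeries.coeff (R := ℤ) (2 * k + 2) (S * S) = PowerSeries.coeff (R := ℤ) (k + 1) (T ^ 2) := by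
    rw [e1, coeff_SS_even, pow_two]
  have h2 : PowerSeries.coeff (R := ℤ) (2 * k + 2) (PowerSeries.X * (S * S)) = 0 := by
    rw [PowerSeries.coeff_succ_X_mul, coeff_SS_odd]
  have h3 : PowerSeries.coeff (R := ℤ) (2 * k + 2) (PowerSeries.X ^ 2 * (S * S))
      = PowerSeries.coeff (R := ℤ) k (T ^ 2) := by
    have : (2 * k + 2 : ℕ) = 2 * k + 2 := rfl
    rw [show (2 * k + 2 : ℕ) = 2 * k + 2 from rfl, PowerSeries.coeff_X_pow_mul,
      coeff_SS_even, pow_two]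
  rw [h1, h2, h3]
  ring

lemma eq_part (m : ℕ) (hm : 1 ≤ m) :
    2 * |u (2 * m)| = |u (2 * m - 1) + u (2 * m + 1)| := by
  obtain ⟨j, rfl⟩ : ∃ j, m = j + 1 := ⟨m - 1, by omega⟩
  have e0 : 2 * (j + 1) = 2 * j + 2 := by ring
  rw [e0, show 2 * j + 2 - 1 = 2 * j + 1 from by omega,
    show 2 * j + 2 + 1 = 2 * (j + 1) + 1 from by omega,
    u_even j, u_odd j, u_odd (j + 1)]
  have h : -2 * u j + -2 * u (j + 1) = -2 * (u (j + 1) + u j) := by ring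
  rw [h, abs_mul]
  norm_num

lemma le_part : ∀ n : ℕ, 1 ≤ n → |u (n - 1) + u (n + 1)| ≤ 2 * |u n| := by
  intro n
  induction n using Nat.strong_induction_on with
  | _ n ih =>
    intro hn
    rcases Nat.even_or_odd n with ⟨m, hm⟩ | ⟨m, hm⟩
    · have hm1 : 1 ≤ m := by omega
      have e : n = 2 * m := by omega
      subst e
      exact (eq_part m hm1).ge
    · have e : n = 2 * m + 1 := by omega
      subst e
      rcases Nat.eq_zero_or_pos m with h0 | h1
      · subst h0
        have h2 : u 2 = u 1 + u 0 := u_even 0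
        have h1' : u 1 = -2 * u 0 := u_odd 0
        have h0' := u_zero
        norm_num [h2, h1', h0']
      · obtain ⟨j, rfl⟩ : ∃ j, m = j + 1 := ⟨m - 1, by omega⟩
        have e1 : 2 * (j + 1) + 1 - 1 = 2 * j + 2 := by omega
        have e2 : 2 * (j + 1) + 1 + 1 = 2 * (j + 1) + 2 := by omega
        rw [e1, e2, u_even j, u_even (j + 1), u_odd (j + 1)]
        have ihx := ih (j + 1) (by omega) (by omega)
        have e3 : (j + 1 : ℕ) - 1 = j := by omega
        rw [e3] at ihx
        have t1 := abs_add_le (u j + u (j + 1 + 1)) (2 * u (j + 1))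
        have t2 : |2 * u (j + 1)| = 2 * |u (j + 1)| := by
          rw [abs_mul]; norm_num
        have t3 : |-2 * u (j + 1)| = 2 * |u (j + 1)| := by
          rw [abs_mul]; norm_num
        have e4 : u (j + 1) + u j + (u (j + 1 + 1) + u (j + 1))
            = (u j + u (j + 1 + 1)) + 2 * u (j + 1) := by ring
        rw [e4, t3]
        linarith

end Stmt13Aux

theorem stmt13 (n : ℕ) (hn : 1 ≤ n) :
    |PowerSeries.coeff (R := ℤ) (n - 1) (T ^ 2) + PowerSeries.coeff (R := ℤ) (n + 1) (T ^ 2)| ≤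
      2 * |PowerSeries.coeff (R := ℤ) n (T ^ 2)| ∧
    (Even n →
      2 * |PowerSeries.coeff (R := ℤ) n (T ^ 2)| =
        |PowerSeries.coeff (R := ℤ) (n - 1) (T ^ 2) + PowerSeries.coeff (R := ℤ) (n + 1) (T ^ 2)|) := by
  refine ⟨Stmt13Aux.le_part n hn, fun he => ?_⟩
  obtain ⟨m, hm⟩ := he
  have hm1 : 1 ≤ m := by omega
  have e : n = 2 * m := by omega
  subst e
  exact Stmt13Aux.eq_part m hm1
end

section
/- The sequence (t_2(n))_{n∈ℕ} is log-concave: for every integer n ≥ 1, t_2(n)² > t_2(n-1)·t_2(n+1). Moreover this is optimal: for every integer k ≥ 3 one has t_2(2^k-4)² = t_2(2^k-5)·t_2(2^k-3) + 1, so t_2(n)² = t_2(n-1)·t_2(n+1) + 1 for infinitely many n. -/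
/-- The Prouhet–Thue–Morse sign sequence. -/
noncomputable def tm (n : ℕ) : ℤ := (-1) ^ (Nat.digits 2 n).sum

/-- `a n = t₂(n)`, the coefficient of `xⁿ` in `T(x)²`. -/
noncomputable def a (n : ℕ) : ℤ := PowerSeries.coeff (R := ℤ) n (T ^ 2)

lemma tm0 : tm 0 = 1 := by simp [tm]

lemma tm_double (k : ℕ) : tm (2 * k) = tm k := by
  rcases Nat.eq_zero_or_pos k with h | h
  · simp [h]
  · unfold tm
    rw [Nat.digits_def' (by norm_num : 1 < 2) (by omega)]
    simp [Nat.mul_div_cancel_left _ (by norm_num : 0 < 2), Nat.mul_mod_right]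

lemma tm_odd (k : ℕ) : tm (2 * k + 1) = -tm k := by
  unfold tm
  rw [Nat.digits_def' (by norm_num : 1 < 2) (by omega)]
  have h1 : (2 * k + 1) % 2 = 1 := by omega
  have h2 : (2 * k + 1) / 2 = k := by omega
  rw [h1, h2]
  simp [pow_add, pow_succ]

lemma a_eq (n : ℕ) : a n = ∑ i ∈ Finset.range (n + 1), tm i * tm (n - i) := by
  unfold a T
  rw [sq, PowerSeries.coeff_mul, Finset.Nat.sum_antidiagonal_eq_sum_range_succ_mk]
  simp [tm]

lemma sum_range_two_mul (f : ℕ → ℤ) (N : ℕ) :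
    ∑ i ∈ Finset.range (2 * N), f i = ∑ j ∈ Finset.range N, (f (2 * j) + f (2 * j + 1)) := by
  induction N with
  | zero => simp
  | succ n ih =>
    rw [show 2 * (n + 1) = 2 * n + 1 + 1 by ring, Finset.sum_range_succ, Finset.sum_range_succ,
      ih, Finset.sum_range_succ]
    ring

lemma a0 : a 0 = 1 := by simp [a_eq, tm0]

lemma a_odd (m : ℕ) : a (2 * m + 1) = -2 * a m := by
  rw [a_eq, show 2 * m + 1 + 1 = 2 * (m + 1) by ring, sum_range_two_mul]
  have h : ∀ j ∈ Finset.range (m + 1),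
      tm (2 * j) * tm (2 * m + 1 - 2 * j) + tm (2 * j + 1) * tm (2 * m + 1 - (2 * j + 1))
      = -2 * (tm j * tm (m - j)) := by
    intro j hj
    have hjm : j ≤ m := by simpa [Nat.lt_succ_iff] using hj
    have e1 : 2 * m + 1 - 2 * j = 2 * (m - j) + 1 := by omega
    have e2 : 2 * m + 1 - (2 * j + 1) = 2 * (m - j) := by omega
    rw [e1, e2, tm_double, tm_odd, tm_double, tm_odd]
    ring
  rw [Finset.sum_congr rfl h, ← Finset.mul_sum, a_eq]

lemma a_even (m : ℕ) : a (2 * m + 2) = a (m + 1) + a m := by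
  rw [a_eq, show 2 * m + 2 + 1 = 2 * (m + 1) + 1 by ring, Finset.sum_range_succ,
    sum_range_two_mul]
  have h : ∀ j ∈ Finset.range (m + 1),
      tm (2 * j) * tm (2 * m + 2 - 2 * j) + tm (2 * j + 1) * tm (2 * m + 2 - (2 * j + 1))
      = tm j * tm (m + 1 - j) + tm j * tm (m - j) := by
    intro j hj
    have hjm : j ≤ m := by simpa [Nat.lt_succ_iff] using hj
    have e1 : 2 * m + 2 - 2 * j = 2 * (m + 1 - j) := by omega
    have e2 : 2 * m + 2 - (2 * j + 1) = 2 * (m - j) + 1 := by omega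
    rw [e1, e2, tm_double, tm_odd, tm_odd, tm_double]
    ring
  rw [Finset.sum_congr rfl h, Finset.sum_add_distrib]
  have h2 : tm (2 * (m + 1)) * tm (2 * m + 2 - 2 * (m + 1)) = tm (m + 1) * tm 0 := by
    rw [tm_double, show 2 * m + 2 - 2 * (m + 1) = 0 by omega]
  rw [h2]
  have h3 : a (m + 1) = ∑ j ∈ Finset.range (m + 1), tm j * tm (m + 1 - j) + tm (m + 1) * tm 0 := by
    rw [a_eq, Finset.sum_range_succ]
    simp
  rw [a_eq m, h3]
  ring

lemma a_parity (n : ℕ) : a n % 2 = (n + 1) % 2 := by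
  induction n using Nat.strong_induction_on with
  | _ n ih =>
    rcases Nat.even_or_odd n with ⟨m, hm⟩ | ⟨m, hm⟩
    · rcases Nat.eq_zero_or_pos m with h0 | h0
      · subst hm h0; rw [a0]; norm_num
      · obtain ⟨p, rfl⟩ : ∃ p, m = p + 1 := ⟨m - 1, by omega⟩
        subst hm
        rw [show (p + 1) + (p + 1) = 2 * p + 2 by ring, a_even]
        have h1 := ih (p + 1) (by omega)
        have h2 := ih p (by omega)
        omega
    · subst hm
      rw [a_odd]
      omega

lemma a1 : a 1 = -2 := by have := a_odd 0; rw [a0] at this; linarith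
lemma a2 : a 2 = -1 := by have := a_even 0; rw [a0, a1] at this; linarith

lemma a_bound (n : ℕ) : |a n + a (n + 2)| ≤ 2 * |a (n + 1)| := by
  induction n using Nat.strong_induction_on with
  | _ n ih =>
    rcases Nat.even_or_odd n with ⟨m, hm⟩ | ⟨m, hm⟩
    · rcases Nat.eq_zero_or_pos m with h0 | h0
      · subst hm h0
        rw [show (0:ℕ)+0 = 0 from rfl, show (0:ℕ)+2 = 2 from rfl, show (0:ℕ)+1 = 1 from rfl,
          a0, a1, a2]
        norm_num
      · obtain ⟨p, rfl⟩ : ∃ p, m = p + 1 := ⟨m - 1, by omega⟩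
        subst hm
        rw [show (p + 1) + (p + 1) = 2 * p + 2 by ring]
        have hA : a (2 * p + 2) = a (p + 1) + a p := a_even p
        have hB : a (2 * p + 2 + 2) = a (p + 2) + a (p + 1) := by
          rw [show 2 * p + 2 + 2 = 2 * (p + 1) + 2 by ring]; exact a_even (p + 1)
        have hC : a (2 * p + 2 + 1) = -2 * a (p + 1) := by
          rw [show 2 * p + 2 + 1 = 2 * (p + 1) + 1 by ring]; exact a_odd (p + 1)
        rw [hA, hB, hC]
        have hI := ih p (by omega)
        calc |a (p + 1) + a p + (a (p + 2) + a (p + 1))|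
            = |(a p + a (p + 2)) + 2 * a (p + 1)| := by ring_nf
          _ ≤ |a p + a (p + 2)| + |2 * a (p + 1)| := abs_add_le _ _
          _ ≤ 2 * |a (p + 1)| + 2 * |a (p + 1)| := by
              rw [abs_mul]; simp only [abs_two]; exact add_le_add hI le_rfl
          _ ≤ 2 * |(-2 : ℤ) * a (p + 1)| := by
              rw [abs_mul]; simp [abs_two]; linarith [abs_nonneg (a (p + 1))]
    · subst hm
      have hB : a (2 * m + 1 + 2) = -2 * a (m + 1) := by
        rw [show 2 * m + 1 + 2 = 2 * (m + 1) + 1 by ring]; exact a_odd (m + 1)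
      have hC : a (2 * m + 1 + 1) = a (m + 1) + a m := a_even m
      rw [a_odd, hB, hC]
      apply le_of_eq
      calc |(-2) * a m + (-2) * a (m + 1)| = |(-2 : ℤ)| * |a (m + 1) + a m| := by
            rw [← abs_mul]; ring_nf
        _ = 2 * |a (m + 1) + a m| := by simp

lemma a_main (n : ℕ) : a n * a (n + 2) < a (n + 1) ^ 2 := by
  have hb := a_bound n
  have hp1 := a_parity n
  have hp2 := a_parity (n + 1)
  have hpar : a n % 2 ≠ a (n + 1) % 2 := by omega
  have hsq : (a n + a (n + 2)) ^ 2 ≤ 4 * a (n + 1) ^ 2 := by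
    have h1 : |a n + a (n + 2)| ^ 2 ≤ (2 * |a (n + 1)|) ^ 2 :=
      pow_le_pow_left₀ (abs_nonneg _) hb 2
    rw [sq_abs] at h1
    calc (a n + a (n + 2))^2 ≤ (2 * |a (n + 1)|)^2 := h1
      _ = 4 * |a (n + 1)|^2 := by ring
      _ = 4 * a (n + 1)^2 := by rw [sq_abs]
  rcases eq_or_ne (a n) (a (n + 2)) with h | h
  · rw [← h] at hsq ⊢
    have hxy : a n ≠ a (n + 1) := by omega
    have hxy' : a n ≠ -(a (n + 1)) := by omega
    have hne : a n ^ 2 ≠ a (n + 1) ^ 2 := by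
      intro hh
      have h0 : (a n - a (n + 1)) * (a n + a (n + 1)) = 0 := by nlinarith [hh]
      rcases mul_eq_zero.1 h0 with h' | h'
      · exact hxy (by linarith)
      · exact hxy' (by linarith)
    have hle : a n ^ 2 ≤ a (n + 1) ^ 2 := by nlinarith [hsq]
    have hlt : a n ^ 2 < a (n + 1) ^ 2 := lt_of_le_of_ne hle hne
    nlinarith [hlt]
  · have h1 : 1 ≤ |a n - a (n + 2)| := Int.one_le_abs (by omega)
    have h2 : 1 ≤ (a n - a (n + 2)) ^ 2 := by
      nlinarith [h1, abs_nonneg (a n - a (n + 2)), sq_abs (a n - a (n + 2))]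
    nlinarith [hsq, h2]

lemma two_pow_ge (k : ℕ) : 2 ^ k ≥ 1 := Nat.one_le_two_pow

lemma pow1 (k : ℕ) : a (2 ^ k - 1) = (-2) ^ k := by
  induction k with
  | zero => simpa using a0
  | succ j ih =>
    have h1 : (2:ℕ) ^ j ≥ 1 := two_pow_ge j
    have h2 : (2:ℕ) ^ (j + 1) = 2 * 2 ^ j := by ring
    rw [show 2 ^ (j + 1) - 1 = 2 * (2 ^ j - 1) + 1 by omega, a_odd, ih]
    ring

lemma pow2 (k : ℕ) : 3 * a (2 ^ (k + 2) - 2) = 1 - (-2) ^ (k + 2) := by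
  induction k with
  | zero => rw [show (2:ℕ)^2 - 2 = 2 by norm_num, a2]; norm_num
  | succ j ih =>
    have h1 : (2:ℕ) ^ (j + 2) ≥ 4 := by calc (2:ℕ)^(j+2) = 4 * 2^j := by ring
                                          _ ≥ 4 * 1 := by have := two_pow_ge j; omega
    have h2 : (2:ℕ) ^ (j + 3) = 2 * 2 ^ (j + 2) := by ring
    have e1 : 2 ^ (j + 3) - 2 = 2 * (2 ^ (j + 2) - 2) + 2 := by omega
    have e2 : (2 ^ (j + 2) - 2) + 1 = 2 ^ (j + 2) - 1 := by omega
    rw [e1, a_even, e2, pow1]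
    have h3 : (-2:ℤ) ^ (j + 3) = -2 * (-2) ^ (j + 2) := by ring
    linarith [ih, h3.le, h3.ge]

lemma pow3 (k : ℕ) : 3 * a (2 ^ (k + 2) - 3) = -2 - (-2) ^ (k + 2) := by
  cases k with
  | zero => rw [show (2:ℕ)^2 - 3 = 1 by norm_num, a1]; norm_num
  | succ j =>
    have h1 : (2:ℕ) ^ (j + 2) ≥ 4 := by calc (2:ℕ)^(j+2) = 4 * 2^j := by ring
                                          _ ≥ 4 * 1 := by have := two_pow_ge j; omega
    have h2 : (2:ℕ) ^ (j + 3) = 2 * 2 ^ (j + 2) := by ring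
    have e1 : 2 ^ (j + 3) - 3 = 2 * (2 ^ (j + 2) - 2) + 1 := by omega
    rw [e1, a_odd]
    have := pow2 j
    have h3 : (-2:ℤ) ^ (j + 3) = -2 * (-2) ^ (j + 2) := by ring
    linarith

lemma pow4 (k : ℕ) : 3 * a (2 ^ (k + 3) - 4) = -1 + (-2) ^ (k + 3) := by
  have h1 : (2:ℕ) ^ (k + 2) ≥ 4 := by calc (2:ℕ)^(k+2) = 4 * 2^k := by ring
                                        _ ≥ 4 * 1 := by have := two_pow_ge k; omega
  have h2 : (2:ℕ) ^ (k + 3) = 2 * 2 ^ (k + 2) := by ring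
  have e1 : 2 ^ (k + 3) - 4 = 2 * (2 ^ (k + 2) - 3) + 2 := by omega
  have e2 : (2 ^ (k + 2) - 3) + 1 = 2 ^ (k + 2) - 2 := by omega
  rw [e1, a_even, e2]
  have hA := pow2 k
  have hB := pow3 k
  have h3 : (-2:ℤ) ^ (k + 3) = -2 * (-2) ^ (k + 2) := by ring
  linarith

lemma pow5 (k : ℕ) : 3 * a (2 ^ (k + 3) - 5) = 4 - (-2) ^ (k + 3) := by
  have h1 : (2:ℕ) ^ (k + 2) ≥ 4 := by calc (2:ℕ)^(k+2) = 4 * 2^k := by ring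
                                        _ ≥ 4 * 1 := by have := two_pow_ge k; omega
  have h2 : (2:ℕ) ^ (k + 3) = 2 * 2 ^ (k + 2) := by ring
  have e1 : 2 ^ (k + 3) - 5 = 2 * (2 ^ (k + 2) - 3) + 1 := by omega
  rw [e1, a_odd]
  have := pow3 k
  have h3 : (-2:ℤ) ^ (k + 3) = -2 * (-2) ^ (k + 2) := by ring
  linarith

lemma a_eqcase (k : ℕ) :
    a (2 ^ (k + 3) - 4) ^ 2 = a (2 ^ (k + 3) - 5) * a (2 ^ (k + 3) - 3) + 1 := by
  have hy := pow4 k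
  have hx := pow5 k
  have hz : 3 * a (2 ^ (k + 3) - 3) = -2 - (-2) ^ (k + 3) := pow3 (k + 1)
  have key : (3 * a (2 ^ (k + 3) - 4)) ^ 2
      = (3 * a (2 ^ (k + 3) - 5)) * (3 * a (2 ^ (k + 3) - 3)) + 9 := by
    rw [hy, hx, hz]; ring
  nlinarith [key]

lemma ha (n : ℕ) : PowerSeries.coeff (R := ℤ) n (T ^ 2) = a n := rfl

theorem stmt14 :
    (∀ n : ℕ, 1 ≤ n →
      PowerSeries.coeff (R := ℤ) (n - 1) (T ^ 2) * PowerSeries.coeff (R := ℤ) (n + 1) (T ^ 2) <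
        PowerSeries.coeff (R := ℤ) n (T ^ 2) ^ 2) ∧
    (∀ k : ℕ, 3 ≤ k →
      PowerSeries.coeff (R := ℤ) (2 ^ k - 4) (T ^ 2) ^ 2 =
        PowerSeries.coeff (R := ℤ) (2 ^ k - 5) (T ^ 2) * PowerSeries.coeff (R := ℤ) (2 ^ k - 3) (T ^ 2) + 1) ∧
    {n : ℕ | 1 ≤ n ∧
      PowerSeries.coeff (R := ℤ) n (T ^ 2) ^ 2 =
        PowerSeries.coeff (R := ℤ) (n - 1) (T ^ 2) * PowerSeries.coeff (R := ℤ) (n + 1) (T ^ 2) + 1}.Infinite := by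
  refine ⟨?_, ?_, ?_⟩
  · intro n hn
    obtain ⟨m, rfl⟩ : ∃ m, n = m + 1 := ⟨n - 1, by omega⟩
    simp only [ha, Nat.add_sub_cancel]
    exact a_main m
  · intro k hk
    obtain ⟨j, rfl⟩ : ∃ j, k = j + 3 := ⟨k - 3, by omega⟩
    simp only [ha]
    exact a_eqcase j
  · apply Set.infinite_of_injective_forall_mem (f := fun j : ℕ => 2 ^ (j + 3) - 4)
    · intro p q h
      have hp : (2:ℕ) ^ (p + 3) ≥ 8 := by calc (2:ℕ)^(p+3) = 8 * 2^p := by ring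
                                            _ ≥ 8 * 1 := by have := two_pow_ge p; omega
      have hq : (2:ℕ) ^ (q + 3) ≥ 8 := by calc (2:ℕ)^(q+3) = 8 * 2^q := by ring
                                            _ ≥ 8 * 1 := by have := two_pow_ge q; omega
      simp only at h
      have h2 : (2:ℕ) ^ (p + 3) = 2 ^ (q + 3) := by omega
      have := Nat.pow_right_injective (le_refl 2) h2
      omega
    · intro j
      have hj : (2:ℕ) ^ (j + 3) ≥ 8 := by calc (2:ℕ)^(j+3) = 8 * 2^j := by ring
                                            _ ≥ 8 * 1 := by have := two_pow_ge j; omega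
      refine ⟨by omega, ?_⟩
      simp only [ha]
      rw [show 2 ^ (j + 3) - 4 - 1 = 2 ^ (j + 3) - 5 by omega,
        show 2 ^ (j + 3) - 4 + 1 = 2 ^ (j + 3) - 3 by omega]
      exact a_eqcase j
end

section
/- For every n ∈ ℕ₊, the three integers t_2(n-1), t_2(n), t_2(n+1) do not all have the same sign; that is, it is not the case that all three are positive, and not the case that all three are negative. -/
namespace Stmt15Aux

noncomputable def t (n : ℕ) : ℤ := (-1) ^ (Nat.digits 2 n).sum

lemma t_zero : t 0 = 1 := by simp [t]

lemma t_even (n : ℕ) : t (2 * n) = t n := by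
  rcases Nat.eq_zero_or_pos n with h | h
  · simp [h]
  · have : Nat.digits 2 (2 * n) = (2 * n) % 2 :: Nat.digits 2 (2 * n / 2) :=
      Nat.digits_def' (by norm_num) (by omega)
    simp [t, this, Nat.mul_div_cancel_left _ (by norm_num : 0 < 2)]

lemma t_odd (n : ℕ) : t (2 * n + 1) = -t n := by
  have : Nat.digits 2 (2 * n + 1) = (2 * n + 1) % 2 :: Nat.digits 2 ((2 * n + 1) / 2) :=
    Nat.digits_def' (by norm_num) (by omega)
  have h2 : (2 * n + 1) / 2 = n := by omega
  have h3 : (2 * n + 1) % 2 = 1 := by omega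
  unfold t
  rw [this, h2, h3, List.sum_cons, pow_add]
  simp

noncomputable def c (n : ℕ) : ℤ := ∑ i ∈ Finset.range (n + 1), t i * t (n - i)

lemma sum_split (f : ℕ → ℤ) (n : ℕ) :
    ∑ i ∈ Finset.range (2 * n), f i =
      (∑ i ∈ Finset.range n, f (2 * i)) + ∑ i ∈ Finset.range n, f (2 * i + 1) := by
  induction n with
  | zero => simp
  | succ k ih =>
    have h : 2 * (k + 1) = (2 * k + 1) + 1 := by ring
    rw [h, Finset.sum_range_succ, Finset.sum_range_succ, Finset.sum_range_succ,
      Finset.sum_range_succ, ih]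
    ring

lemma c_rec1 (n : ℕ) : c (2 * n + 1) = -2 * c n := by
  have h : (2 * n + 1) + 1 = 2 * (n + 1) := by ring
  rw [c, h, sum_split]
  have e1 : ∀ a ∈ Finset.range (n + 1), t (2 * a) * t (2 * n + 1 - 2 * a)
      = -(t a * t (n - a)) := by
    intro a ha
    have ha' : a ≤ n := by simpa [Nat.lt_succ_iff] using ha
    have : 2 * n + 1 - 2 * a = 2 * (n - a) + 1 := by omega
    rw [this, t_even, t_odd]; ring
  have e2 : ∀ a ∈ Finset.range (n + 1), t (2 * a + 1) * t (2 * n + 1 - (2 * a + 1))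
      = -(t a * t (n - a)) := by
    intro a ha
    have ha' : a ≤ n := by simpa [Nat.lt_succ_iff] using ha
    have : 2 * n + 1 - (2 * a + 1) = 2 * (n - a) := by omega
    rw [this, t_even, t_odd]; ring
  rw [Finset.sum_congr rfl e1, Finset.sum_congr rfl e2, Finset.sum_neg_distrib, c]
  ring

lemma c_rec2 (n : ℕ) : c (2 * n + 2) = c n + c (n + 1) := by
  have h : (2 * n + 2) + 1 = 2 * (n + 1) + 1 := by ring
  rw [c, h, Finset.sum_range_succ, sum_split]
  have e1 : ∀ a ∈ Finset.range (n + 1), t (2 * a) * t (2 * n + 2 - 2 * a)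
      = t a * t (n + 1 - a) := by
    intro a ha
    have ha' : a ≤ n := by simpa [Nat.lt_succ_iff] using ha
    have : 2 * n + 2 - 2 * a = 2 * (n + 1 - a) := by omega
    rw [this, t_even, t_even]
  have e2 : ∀ a ∈ Finset.range (n + 1), t (2 * a + 1) * t (2 * n + 2 - (2 * a + 1))
      = t a * t (n - a) := by
    intro a ha
    have ha' : a ≤ n := by simpa [Nat.lt_succ_iff] using ha
    have : 2 * n + 2 - (2 * a + 1) = 2 * (n - a) + 1 := by omega
    rw [this, t_odd, t_odd]; ring
  rw [Finset.sum_congr rfl e1, Finset.sum_congr rfl e2]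
  have hlast : 2 * (n + 1) = 2 * n + 2 := by ring
  have hc1 : c (n + 1) = (∑ a ∈ Finset.range (n + 1), t a * t (n + 1 - a))
      + t (n + 1) * t 0 := by
    rw [c, Finset.sum_range_succ]
    simp
  have hend : t (2 * (n + 1)) * t (2 * n + 1 + 1 - 2 * (n + 1)) = t (n + 1) * t 0 := by
    have : 2 * n + 1 + 1 - 2 * (n + 1) = 0 := by omega
    rw [this, t_even]
  rw [hend]
  rw [c]
  have : ∑ a ∈ Finset.range (n + 1), t a * t (n + 1 - a)
      = c (n + 1) - t (n + 1) * t 0 := by omega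
  rw [this]; ring

noncomputable def c' (n : ℕ) : ℤ := -c n

lemma c'_rec1 (n : ℕ) : c' (2 * n + 1) = -2 * c' n := by
  unfold c'; rw [c_rec1]; ring

lemma c'_rec2 (n : ℕ) : c' (2 * n + 2) = c' n + c' (n + 1) := by
  unfold c'; rw [c_rec2]; ring

lemma genOdd (f : ℕ → ℤ) (h1 : ∀ n, f (2 * n + 1) = -2 * f n)
    (h2 : ∀ n, f (2 * n + 2) = f n + f (n + 1)) (m : ℕ) :
    ¬(0 < f (2 * m + 1) ∧ 0 < f (2 * m + 2) ∧ 0 < f (2 * m + 3)) := by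
  rintro ⟨ha, hb, hc⟩
  have e3 : 2 * m + 3 = 2 * (m + 1) + 1 := by ring
  rw [h1] at ha
  rw [h2] at hb
  rw [e3, h1] at hc
  linarith

lemma genEven (f : ℕ → ℤ) (h1 : ∀ n, f (2 * n + 1) = -2 * f n)
    (h2 : ∀ n, f (2 * n + 2) = f n + f (n + 1)) (m : ℕ) :
    ¬(0 < f (2 * m) ∧ 0 < f (2 * m + 1) ∧ 0 < f (2 * m + 2)) := by
  induction m using Nat.strong_induction_on with
  | _ m ih =>
  rintro ⟨ha, hb, hc⟩
  rcases m with _ | k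
  · have e : f 1 = -2 * f 0 := by have := h1 0; norm_num at this ⊢; linarith
    norm_num at ha hb
    linarith
  · have ea : f (2 * (k + 1)) = f k + f (k + 1) := by
      rw [show 2 * (k + 1) = 2 * k + 2 by ring, h2]
    have eb : f (2 * (k + 1) + 1) = -2 * f (k + 1) := h1 (k + 1)
    have ec : f (2 * (k + 1) + 2) = f (k + 1) + f (k + 2) := h2 (k + 1)
    rw [ea] at ha
    rw [eb] at hb
    rw [ec] at hc
    have hk1neg : f (k + 1) < 0 := by linarith
    rcases Nat.even_or_odd (k + 1) with ⟨r, hr⟩ | ⟨r, hr⟩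
    · -- k + 1 = 2r with r ≥ 1
      obtain ⟨s, hs⟩ : ∃ s, r = s + 1 := ⟨r - 1, by omega⟩
      have e1 : f k = -2 * f s := by rw [show k = 2 * s + 1 by omega, h1]
      have e2 : f (k + 1) = f s + f (s + 1) := by rw [show k + 1 = 2 * s + 2 by omega, h2]
      have e3 : f (k + 2) = -2 * f (s + 1) := by
        rw [show k + 2 = 2 * (s + 1) + 1 by omega, h1]
      linarith
    · -- k + 1 = 2r + 1
      have emid : f (k + 1) = -2 * f r := by rw [show k + 1 = 2 * r + 1 by omega, h1]
      have hrpos : 0 < f r := by linarith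
      rcases Nat.eq_zero_or_pos r with hr0 | hrp
      · have hk0 : k = 0 := by omega
        rw [hk0] at ha emid
        rw [hr0] at hrpos emid
        linarith
      · obtain ⟨s, hs⟩ : ∃ s, r = s + 1 := ⟨r - 1, by omega⟩
        have e1 : f k = f s + f (s + 1) := by rw [show k = 2 * s + 2 by omega, h2]
        have e3 : f (k + 2) = f r + f (r + 1) := by
          rw [show k + 2 = 2 * r + 2 by omega, h2]
        have hfsr : f (s + 1) = f r := by rw [hs]
        have hs_pos : 0 < f s := by linarith
        have hs1_pos : 0 < f (s + 1) := by linarith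
        have hs2_pos : 0 < f (s + 2) := by
          have : f (s + 2) = f (r + 1) := by rw [hs]
          linarith
        rcases Nat.even_or_odd s with ⟨u, hu⟩ | ⟨u, hu⟩
        · refine ih u (by omega) ⟨?_, ?_, ?_⟩
          · rw [show 2 * u = s by omega]; exact hs_pos
          · rw [show 2 * u + 1 = s + 1 by omega]; exact hs1_pos
          · rw [show 2 * u + 2 = s + 2 by omega]; exact hs2_pos
        · refine genOdd f h1 h2 u ⟨?_, ?_, ?_⟩
          · rw [show 2 * u + 1 = s by omega]; exact hs_pos
          · rw [show 2 * u + 2 = s + 1 by omega]; exact hs1_pos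
          · rw [show 2 * u + 3 = s + 2 by omega]; exact hs2_pos

lemma coeff_Tsq (n : ℕ) : PowerSeries.coeff (R := ℤ) n (T ^ 2) = c n := by
  rw [pow_two, PowerSeries.coeff_mul, Finset.Nat.sum_antidiagonal_eq_sum_range_succ_mk, c]
  refine Finset.sum_congr rfl fun i _ => ?_
  simp [T, t, PowerSeries.coeff_mk]

end Stmt15Aux

theorem stmt15 (n : ℕ) (hn : 1 ≤ n) :
    ¬(0 < PowerSeries.coeff (R := ℤ) (n - 1) (T ^ 2) ∧ 0 < PowerSeries.coeff (R := ℤ) n (T ^ 2) ∧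
        0 < PowerSeries.coeff (R := ℤ) (n + 1) (T ^ 2)) ∧
    ¬(PowerSeries.coeff (R := ℤ) (n - 1) (T ^ 2) < 0 ∧ PowerSeries.coeff (R := ℤ) n (T ^ 2) < 0 ∧
        PowerSeries.coeff (R := ℤ) (n + 1) (T ^ 2) < 0) := by
  obtain ⟨k, rfl⟩ : ∃ k, n = k + 1 := ⟨n - 1, by omega⟩
  have hsub : k + 1 - 1 = k := rfl
  rw [hsub, Stmt15Aux.coeff_Tsq, Stmt15Aux.coeff_Tsq, Stmt15Aux.coeff_Tsq]
  rcases Nat.even_or_odd k with ⟨r, hr⟩ | ⟨r, hr⟩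
  · have hk : k = 2 * r := by omega
    constructor
    · intro ⟨x, y, z⟩
      refine Stmt15Aux.genEven _ Stmt15Aux.c_rec1 Stmt15Aux.c_rec2 r ⟨?_, ?_, ?_⟩
      · rw [← hk]; exact x
      · rw [show 2 * r + 1 = k + 1 by omega]; exact y
      · rw [show 2 * r + 2 = k + 1 + 1 by omega]; exact z
    · intro ⟨x, y, z⟩
      refine Stmt15Aux.genEven _ Stmt15Aux.c'_rec1 Stmt15Aux.c'_rec2 r ⟨?_, ?_, ?_⟩
      · rw [← hk]; unfold Stmt15Aux.c'; linarith
      · rw [show 2 * r + 1 = k + 1 by omega]; unfold Stmt15Aux.c'; linarith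
      · rw [show 2 * r + 2 = k + 1 + 1 by omega]; unfold Stmt15Aux.c'; linarith
  · have hk : k = 2 * r + 1 := by omega
    constructor
    · intro ⟨x, y, z⟩
      refine Stmt15Aux.genOdd _ Stmt15Aux.c_rec1 Stmt15Aux.c_rec2 r ⟨?_, ?_, ?_⟩
      · rw [← hk]; exact x
      · rw [show 2 * r + 2 = k + 1 by omega]; exact y
      · rw [show 2 * r + 3 = k + 1 + 1 by omega]; exact z
    · intro ⟨x, y, z⟩
      refine Stmt15Aux.genOdd _ Stmt15Aux.c'_rec1 Stmt15Aux.c'_rec2 r ⟨?_, ?_, ?_⟩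
      · rw [← hk]; unfold Stmt15Aux.c'; linarith
      · rw [show 2 * r + 2 = k + 1 by omega]; unfold Stmt15Aux.c'; linarith
      · rw [show 2 * r + 3 = k + 1 + 1 by omega]; unfold Stmt15Aux.c'; linarith
end

section
/- For every m ∈ ℕ with m ≥ 1 and every n ∈ ℕ one has n·b_m(n) = m·Σ_{i=0}^{n} (n-i)·b_1(n-i)·b_{m-1}(i), where b_0(0) = 1 and b_0(i) = 0 for i ≥ 1. In particular, if gcd(m,n) = 1 then m divides b_m(n). -/
lemma T_constantCoeff : PowerSeries.constantCoeff T = 1 := by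
  rw [← PowerSeries.coeff_zero_eq_constantCoeff]
  simp [T]

/-- `T` as a unit of `ℤ⟦x⟧` (its constant coefficient is `1`). -/
noncomputable def TU : (PowerSeries ℤ)ˣ where
  val := T
  inv := PowerSeries.invOfUnit T 1
  val_inv := PowerSeries.mul_invOfUnit T 1 (by simpa using T_constantCoeff)
  inv_val := by
    rw [mul_comm]; exact PowerSeries.mul_invOfUnit T 1 (by simpa using T_constantCoeff)

/-- `b m n` is the coefficient of `xⁿ` in `T(x)^{-m}` (so `b 0 0 = 1` and
`b 0 i = 0` for `i ≥ 1`). -/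
noncomputable def b (m n : ℕ) : ℤ :=
  PowerSeries.coeff n (((TU⁻¹ : (PowerSeries ℤ)ˣ) : PowerSeries ℤ) ^ m)

lemma key (m : ℕ) (hm : 1 ≤ m) (n : ℕ) :
    (n : ℤ) * b m n =
      (m : ℤ) * ∑ i ∈ Finset.range (n + 1),
        ((n - i : ℕ) : ℤ) * b 1 (n - i) * b (m - 1) i := by
  set F : PowerSeries ℤ := ((TU⁻¹ : (PowerSeries ℤ)ˣ) : PowerSeries ℤ) with hF
  rcases n with _ | k
  · simp [b]
  · have hd : PowerSeries.derivative ℤ (F ^ m) =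
        m • (F ^ (m - 1)) • (PowerSeries.derivative ℤ F) :=
      Derivation.leibniz_pow (PowerSeries.derivative ℤ) F m
    have := congrArg (fun g => PowerSeries.coeff k g) hd
    simp only [smul_eq_mul (a := F ^ (m - 1)), map_nsmul] at this
    simp only [nsmul_eq_mul, PowerSeries.coeff_derivative, PowerSeries.coeff_mul] at this
    rw [Finset.Nat.sum_antidiagonal_eq_sum_range_succ_mk] at this
    have hL : ((k + 1 : ℕ) : ℤ) * b m (k + 1) =
        PowerSeries.coeff (k + 1) (F ^ m) * (k + 1) := by
      rw [b]; push_cast; ring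
    rw [hL, this]
    rw [Finset.sum_range_succ (fun i => ((k + 1 - i : ℕ) : ℤ) * b 1 (k + 1 - i) * b (m-1) i)]
    simp only [Nat.sub_self, Nat.cast_zero, zero_mul, add_zero]
    rw [Finset.mul_sum, Finset.mul_sum]
    apply Finset.sum_congr rfl
    intro i hi
    have hik : i ≤ k := Nat.lt_succ_iff.mp (Finset.mem_range.mp hi)
    have h1 : k + 1 - i = (k - i) + 1 := by omega
    rw [h1]
    have hb1 : PowerSeries.coeff (k - i + 1) F = b 1 (k - i + 1) := by
      simp [b, hF]
    have hbm : PowerSeries.coeff i (F ^ (m - 1)) = b (m - 1) i := rfl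
    rw [hb1, hbm]
    push_cast
    ring

theorem stmt17 (m : ℕ) (hm : 1 ≤ m) (n : ℕ) :
    ((n : ℤ) * b m n =
      (m : ℤ) * ∑ i ∈ Finset.range (n + 1),
        ((n - i : ℕ) : ℤ) * b 1 (n - i) * b (m - 1) i) ∧
    (Nat.gcd m n = 1 → (m : ℤ) ∣ b m n) := by
  refine ⟨key m hm n, fun hg => ?_⟩
  have hdvd : (m : ℤ) ∣ (n : ℤ) * b m n := ⟨_, key m hm n⟩
  have hcop : IsCoprime (m : ℤ) (n : ℤ) := by
    rw [Int.isCoprime_iff_gcd_eq_one]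
    simpa using hg
  exact hcop.dvd_of_dvd_mul_left hdvd
end

section
/- Let m ∈ ℕ₊ and n ∈ ℕ. If m > n²/log 2 (logarithm to base e), then t_m(n) ≠ 0. -/
set_option maxHeartbeats 1000000

namespace Stmt19Aux
open PowerSeries Finset

/-! ### The doubling operator f(X) ↦ f(X²) -/

noncomputable def D (f : ℤ⟦X⟧) : ℤ⟦X⟧ :=
  PowerSeries.mk fun k => if Even k then coeff (k/2) f else 0

lemma D_coeff (f : ℤ⟦X⟧) (q : ℕ) :
    coeff q (D f) = if Even q then coeff (q/2) f else 0 := by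
  simp [D]

lemma D_coeff_even (f : ℤ⟦X⟧) (j : ℕ) : coeff (2*j) (D f) = coeff j f := by
  simp [D, even_two_mul j, Nat.mul_div_cancel_left j (by norm_num : 0 < 2)]

lemma D_coeff_odd (f : ℤ⟦X⟧) (k : ℕ) (h : ¬ Even k) : coeff k (D f) = 0 := by
  simp [D, h]

def dbl : ℕ × ℕ ↪ ℕ × ℕ :=
  ⟨fun p => (2 * p.1, 2 * p.2), by
    rintro ⟨a1, a2⟩ ⟨b1, b2⟩ h
    simp only [Prod.mk.injEq] at h ⊢
    omega⟩

lemma D_mul (f g : ℤ⟦X⟧) : D (f * g) = D f * D g := by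
  ext k
  rw [coeff_mul]
  rcases Nat.even_or_odd k with ⟨l, hl⟩ | hk
  · subst hl
    rw [show l + l = 2*l by ring, D_coeff_even, coeff_mul]
    have key : ∑ p ∈ antidiagonal (2*l), (coeff p.1) (D f) * (coeff p.2) (D g)
        = ∑ p ∈ (antidiagonal l).map dbl, (coeff p.1) (D f) * (coeff p.2) (D g) := by
      symm
      apply Finset.sum_subset
      · rintro ⟨p1, p2⟩ hp
        rw [Finset.mem_map] at hp
        obtain ⟨⟨q1, q2⟩, hq, heq⟩ := hp
        rw [Finset.HasAntidiagonal.mem_antidiagonal] at hq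
        change (2 * q1, 2 * q2) = (p1, p2) at heq
        simp only [dbl, Function.Embedding.coeFn_mk, Prod.mk.injEq] at heq
        rw [Finset.HasAntidiagonal.mem_antidiagonal]
        omega
      · rintro ⟨p1, p2⟩ hp hnp
        rw [Finset.HasAntidiagonal.mem_antidiagonal] at hp
        rcases Nat.even_or_odd p1 with ⟨u, hu⟩ | ho
        · rcases Nat.even_or_odd p2 with ⟨v, hv⟩ | ho2
          · exfalso; apply hnp
            rw [Finset.mem_map]
            refine ⟨(u, v), by rw [Finset.HasAntidiagonal.mem_antidiagonal]; omega, ?_⟩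
            show (2 * u, 2 * v) = (p1, p2)
            simp only [dbl, Function.Embedding.coeFn_mk, Prod.mk.injEq]
            omega
          · rw [D_coeff_odd g p2 (by simpa using ho2), mul_zero]
        · rw [D_coeff_odd f p1 (by simpa using ho), zero_mul]
    rw [key, Finset.sum_map]
    apply Finset.sum_congr rfl
    intro p _
    simp only [dbl, Function.Embedding.coeFn_mk]
    exact (congrArg₂ (· * ·) (D_coeff_even f p.1) (D_coeff_even g p.2)).symm
  · rw [D_coeff_odd _ _ (by simpa using hk)]
    symm
    apply Finset.sum_eq_zero
    rintro ⟨p1, p2⟩ hp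
    rw [Finset.HasAntidiagonal.mem_antidiagonal] at hp
    rcases Nat.even_or_odd p1 with he | ho
    · have : ¬ Even p2 := by
        rcases he with ⟨u, hu⟩; rcases hk with ⟨v, hv⟩
        rintro ⟨w, hw⟩; omega
      rw [D_coeff_odd g p2 this, mul_zero]
    · rw [D_coeff_odd f p1 (by simpa using ho), zero_mul]

lemma D_one : D (1 : ℤ⟦X⟧) = 1 := by
  ext k
  rcases Nat.even_or_odd k with ⟨l, hl⟩ | hk
  · subst hl
    rw [show l + l = 2*l by ring, D_coeff_even]
    rcases Nat.eq_zero_or_pos l with rfl | hl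
    · simp
    · rw [PowerSeries.coeff_one, PowerSeries.coeff_one]
      have h1 : l ≠ 0 := by omega
      have h2 : 2*l ≠ 0 := by omega
      simp [h1, h2]
  · rw [D_coeff_odd _ _ (by simpa using hk), PowerSeries.coeff_one]
    have : k ≠ 0 := by rintro rfl; simp at hk
    simp [this]

lemma D_pow (f : ℤ⟦X⟧) (m : ℕ) : D (f ^ m) = (D f) ^ m := by
  induction m with
  | zero => simpa using D_one
  | succ m ih => rw [pow_succ, pow_succ, D_mul, ih]

/-! ### Digit sums and  T = (1-X) · D T -/

lemma digsum_even (j : ℕ) : (Nat.digits 2 (2*j)).sum = (Nat.digits 2 j).sum := by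
  rcases Nat.eq_zero_or_pos j with rfl | hj
  · simp
  · rw [Nat.digits_def' (by norm_num : (1:ℕ) < 2) (by omega : 0 < 2*j)]
    simp [Nat.mul_div_cancel_left j (by norm_num : 0 < 2), Nat.mul_mod_right]

lemma digsum_odd (j : ℕ) : (Nat.digits 2 (2*j+1)).sum = (Nat.digits 2 j).sum + 1 := by
  rw [Nat.digits_def' (by norm_num : (1:ℕ) < 2) (by omega : 0 < 2*j+1)]
  have h1 : (2*j+1) % 2 = 1 := by omega
  have h2 : (2*j+1) / 2 = j := by omega
  simp [h1, h2]; ring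

lemma T_eq : T = (1 - X) * D T := by
  ext k
  rw [sub_mul, one_mul, map_sub]
  rcases Nat.even_or_odd k with ⟨l, hl⟩ | hk
  · subst hl
    rw [show l + l = 2*l by ring, D_coeff_even]
    have hxz : coeff (2*l) (X * D T) = 0 := by
      rcases Nat.eq_zero_or_pos l with rfl | hl
      · simp
      · rw [show 2*l = (2*l-1) + 1 by omega, PowerSeries.coeff_succ_X_mul]
        apply D_coeff_odd
        rintro ⟨w, hw⟩; omega
    rw [hxz, sub_zero]
    simp only [T, PowerSeries.coeff_mk]
    rw [digsum_even]
  · obtain ⟨j, hj⟩ := hk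
    subst hj
    rw [D_coeff_odd _ _ (by rintro ⟨w, hw⟩; omega)]
    rw [PowerSeries.coeff_succ_X_mul, D_coeff_even]
    simp only [T, PowerSeries.coeff_mk]
    rw [digsum_odd, zero_sub, pow_succ]
    ring

/-! ### coefficients of (1-X)^m -/

lemma coeff_one_sub_X_pow (m k : ℕ) :
    coeff k ((1 - X : ℤ⟦X⟧) ^ m) = (-1) ^ k * (m.choose k) := by
  have h : ((1 : ℤ⟦X⟧) - X) = ((-X) + 1) := by ring
  have hterm : ∀ i, (-X : ℤ⟦X⟧)^i * 1^(m-i) * (m.choose i : ℤ⟦X⟧)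
      = PowerSeries.C ((-1)^i * (m.choose i : ℤ)) * X^i := by
    intro i
    rw [one_pow, mul_one, map_mul, map_pow, map_neg, map_one, map_natCast]
    ring
  rw [h, add_pow, Finset.sum_congr rfl (fun i _ => hterm i), map_sum]
  simp only [PowerSeries.coeff_C_mul, PowerSeries.coeff_X_pow]
  rcases le_or_gt k m with hkm | hkm
  · rw [Finset.sum_eq_single k]
    · simp
    · intro i _ hik
      simp [Ne.symm hik]
    · intro hk
      exfalso; exact hk (Finset.mem_range.mpr (by omega))
  · rw [Finset.sum_eq_zero, Nat.choose_eq_zero_of_lt hkm]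
    · simp
    · intro i hi
      rw [Finset.mem_range] at hi
      have : k ≠ i := by omega
      simp [show k ≠ i by omega]

/-! ### the recurrence -/

lemma sum_range_even (N : ℕ) (h : ℕ → ℤ) :
    ∑ q ∈ range N, (if Even q then h q else 0) = ∑ j ∈ range ((N+1)/2), h (2*j) := by
  induction N with
  | zero => simp
  | succ N ih =>
    rw [Finset.sum_range_succ, ih]
    rcases Nat.even_or_odd N with hN | hN
    · obtain ⟨a, rfl⟩ := hN
      rw [if_pos (by exact ⟨a, rfl⟩)]
      have h1 : (a + a + 1 + 1)/2 = a + 1 := by omega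
      have h2 : (a + a + 1)/2 = a := by omega
      rw [h1, h2, Finset.sum_range_succ]
      congr 2
      omega
    · obtain ⟨a, rfl⟩ := hN
      rw [if_neg (by rintro ⟨w,hw⟩; omega)]
      have h1 : (2*a + 1 + 1 + 1)/2 = a + 1 := by omega
      have h2 : (2*a + 1 + 1)/2 = a + 1 := by omega
      rw [h1, h2, add_zero]

lemma coeff_pow_rec (m k : ℕ) :
    coeff k (T ^ m) =
      ∑ j ∈ range (k/2 + 1), (-1)^(k - 2*j) * (m.choose (k - 2*j)) * coeff j (T ^ m) := by
  conv_lhs => rw [T_eq, mul_pow, ← D_pow, mul_comm, coeff_mul,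
    Finset.Nat.sum_antidiagonal_eq_sum_range_succ_mk]
  have hterm : ∀ q, coeff q (D (T^m)) * coeff (k - q) ((1-X)^m)
      = if Even q then ((-1)^(k-q) * (m.choose (k-q))) * coeff (q/2) (T^m) else 0 := by
    intro q
    rw [D_coeff, coeff_one_sub_X_pow]
    split
    · ring
    · simp
  rw [show Nat.succ k = k + 1 from rfl, Finset.sum_congr rfl (fun q hq => hterm q), sum_range_even]
  have h2 : (k + 1 + 1)/2 = k/2 + 1 := by omega
  rw [h2]
  apply Finset.sum_congr rfl
  intro j hj
  have : 2*j/2 = j := by omega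
  rw [this]

/-! ### the signed sequence s -/

noncomputable def sInt (m k : ℕ) : ℤ := (-1)^k * coeff k (T^m)

lemma neg_one_sq_pow (k : ℕ) : ((-1:ℤ))^k * (-1)^k = 1 := by
  rw [← pow_add, show k + k = 2*k by ring, pow_mul]
  norm_num

lemma coeff_eq_sInt (m k : ℕ) : coeff k (T^m) = (-1)^k * sInt m k := by
  unfold sInt
  rw [← mul_assoc, neg_one_sq_pow, one_mul]

lemma sInt_zero (m : ℕ) : sInt m 0 = 1 := by
  unfold sInt
  rw [PowerSeries.coeff_zero_eq_constantCoeff, map_pow]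
  have : constantCoeff T = 1 := by
    rw [show (constantCoeff) T = coeff 0 T by rw [PowerSeries.coeff_zero_eq_constantCoeff]]
    simp [T]
  rw [this]
  simp

lemma sInt_rec (m k : ℕ) :
    sInt m k = ∑ j ∈ range (k/2 + 1), (-1)^j * (m.choose (k - 2*j)) * sInt m j := by
  unfold sInt
  rw [coeff_pow_rec, Finset.mul_sum]
  apply Finset.sum_congr rfl
  intro j hj
  rw [Finset.mem_range] at hj
  have h2j : 2*j ≤ k := by omega
  have hsgn : ((-1:ℤ))^(k - 2*j) = (-1)^k := by
    have : (k - 2*j) + 2*j = k := by omega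
    calc ((-1:ℤ))^(k-2*j) = (-1)^(k-2*j) * ((-1)^(2*j)) := by
          rw [pow_mul]; simp
      _ = (-1)^((k-2*j) + 2*j) := by rw [pow_add]
      _ = (-1)^k := by rw [this]
  rw [hsgn]
  ring_nf
  rw [show ((-1:ℤ))^(k*2) = 1 by rw [mul_comm, pow_mul]; norm_num,
      show ((-1:ℤ))^(j*2) = 1 by rw [mul_comm, pow_mul]; norm_num]

lemma sInt_one (m : ℕ) : sInt m 1 = m := by
  rw [sInt_rec]
  simp [sInt_zero]


-- r_j ≤ Q^j/j! in cleared-denominator natural number form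
lemma choose_ratio_bound (m k : ℕ) (hk : k ≤ m) :
    ∀ i, 2*i ≤ k →
    (m.choose (k-2*i)) * (m.choose i) * (Nat.factorial i) * ((m-k+1)*(m-k+2))^i
      ≤ m.choose k * (k*(k-1)*m)^i := by
  intro i
  induction i with
  | zero => intro _; simp [Nat.factorial]
  | succ i ih =>
    intro hik
    have h2i : 2*i ≤ k := by omega
    have hA := ih h2i
    set P := (m-k+1)*(m-k+2) with hP
    set N := k*(k-1)*m with hN
    -- identities
    have e1 : m.choose (k-2*i-2) * ((m-(k-2*i)+1)*(m-(k-2*i)+2))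
        = m.choose (k-2*i) * ((k-2*i)*(k-2*i-1)) := by
      have ha : k-2*i-2+1 = k-2*i-1 := by omega
      have hb : k-2*i-2+2 = k-2*i := by omega
      have i1 := Nat.choose_succ_right_eq m (k-2*i-2)
      have i2 := Nat.choose_succ_right_eq m (k-2*i-1)
      -- i1 : m.choose (k-2i-1) * (k-2i-1) = m.choose (k-2i-2) * (m - (k-2i-2))
      rw [ha] at i1
      have hb' : k-2*i-1+1 = k-2*i := by omega
      rw [hb'] at i2
      -- combine
      have hm1 : m - (k-2*i-2) = m-(k-2*i)+2 := by omega
      have hm2 : m - (k-2*i-1) = m-(k-2*i)+1 := by omega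
      rw [hm1] at i1
      rw [hm2] at i2
      calc m.choose (k-2*i-2) * ((m-(k-2*i)+1)*(m-(k-2*i)+2))
          = (m.choose (k-2*i-2) * (m-(k-2*i)+2)) * (m-(k-2*i)+1) := by ring
        _ = (m.choose (k-2*i-1) * (k-2*i-1)) * (m-(k-2*i)+1) := by rw [← i1]
        _ = (m.choose (k-2*i-1) * (m-(k-2*i)+1)) * (k-2*i-1) := by ring
        _ = (m.choose (k-2*i) * (k-2*i)) * (k-2*i-1) := by rw [← i2]
        _ = m.choose (k-2*i) * ((k-2*i)*(k-2*i-1)) := by ring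
    have e2 : m.choose (i+1) * (i+1) = m.choose i * (m - i) := Nat.choose_succ_right_eq m i
    -- termwise comparison
    have e3 : ((k-2*i)*(k-2*i-1)) * (m-i) * P ≤ N * ((m-(k-2*i)+1)*(m-(k-2*i)+2)) := by
      rw [hP, hN]
      have t1 : (k-2*i)*(k-2*i-1) ≤ k*(k-1) := by
        apply Nat.mul_le_mul <;> omega
      have t2 : m - i ≤ m := by omega
      have t3 : (m-k+1)*(m-k+2) ≤ (m-(k-2*i)+1)*(m-(k-2*i)+2) := by
        apply Nat.mul_le_mul <;> omega
      exact Nat.mul_le_mul (Nat.mul_le_mul t1 t2) t3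
    have hE1pos : 0 < (m-(k-2*i)+1)*(m-(k-2*i)+2) := by positivity
    -- key step: multiply goal by E1 := (m-(k-2i)+1)(m-(k-2i)+2)
    apply Nat.le_of_mul_le_mul_right _ hE1pos
    have hsub : k - 2*(i+1) = k - 2*i - 2 := by omega
    rw [hsub]
    calc m.choose (k-2*i-2) * m.choose (i+1) * (i+1).factorial * P^(i+1)
          * ((m-(k-2*i)+1)*(m-(k-2*i)+2))
        = (m.choose (k-2*i-2) * ((m-(k-2*i)+1)*(m-(k-2*i)+2)))
          * (m.choose (i+1) * (i+1)) * i.factorial * P^i * P := by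
          rw [Nat.factorial_succ]; ring
      _ = (m.choose (k-2*i) * ((k-2*i)*(k-2*i-1))) * (m.choose i * (m-i))
          * i.factorial * P^i * P := by rw [e1, e2]
      _ = (m.choose (k-2*i) * m.choose i * i.factorial * P^i)
          * (((k-2*i)*(k-2*i-1)) * (m-i) * P) := by ring
      _ ≤ (m.choose k * N^i) * (N * ((m-(k-2*i)+1)*(m-(k-2*i)+2))) :=
          Nat.mul_le_mul hA e3
      _ = m.choose k * N^(i+1) * ((m-(k-2*i)+1)*(m-(k-2*i)+2)) := by ring


noncomputable def RR (x : ℚ) : ℚ := (x^2/2 + x^3/4)*(1+x)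
noncomputable def LL (x : ℚ) : ℚ := (x + x^3/4)*(1 + RR (x/4))

lemma RR_nonneg {x : ℚ} (hx : 0 ≤ x) : 0 ≤ RR x := by unfold RR; positivity

lemma RR_mono {x y : ℚ} (hx : 0 ≤ x) (hxy : x ≤ y) : RR x ≤ RR y := by
  have hy : 0 ≤ y := le_trans hx hxy
  unfold RR
  gcongr <;> positivity

lemma RR_small {x : ℚ} (hx : 0 ≤ x) (hx2 : x ≤ 3/4) : RR (x/4) ≤ x := by
  unfold RR; nlinarith [sq_nonneg x, pow_le_pow_left₀ hx hx2 2, pow_le_pow_left₀ hx hx2 3]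

lemma LL_nonneg {x : ℚ} (hx : 0 ≤ x) : 0 ≤ LL x := by
  have := RR_nonneg (by positivity : (0:ℚ) ≤ x/4)
  unfold LL; positivity

lemma LL_small {y : ℚ} (hy : 0 ≤ y) (hy2 : y ≤ 3/16) : LL y ≤ 1 := by
  have h1 : RR (y/4) ≤ y := RR_small hy (by linarith)
  have h0 : 0 ≤ RR (y/4) := RR_nonneg (by positivity)
  unfold LL
  nlinarith [pow_le_pow_left₀ hy hy2 3]

lemma LL_final {x : ℚ} (hx : 0 ≤ x) (hx2 : x ≤ 3/4) : LL x ≤ 9/10 := by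
  have h1 : RR (x/4) ≤ 23/1000 := by
    unfold RR
    have e2 : (x/4)^2 ≤ 9/256 := by nlinarith
    have e3 : (x/4)^3 ≤ 27/4096 := by
      have := pow_le_pow_left₀ (by positivity : (0:ℚ) ≤ x/4) (by linarith : x/4 ≤ 3/16) 3
      calc (x/4)^3 ≤ (3/16)^3 := this
        _ = 27/4096 := by norm_num
    have e4 : 1 + x/4 ≤ 19/16 := by linarith
    have h0 : (0:ℚ) ≤ (x/4)^2/2 + (x/4)^3/4 := by positivity
    have h5 : (x/4)^2/2 + (x/4)^3/4 ≤ 9/512 + 27/16384 := by linarith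
    calc ((x/4)^2/2 + (x/4)^3/4)*(1+x/4) ≤ (9/512 + 27/16384)*(19/16) := by nlinarith
      _ ≤ 23/1000 := by norm_num
  have h0 : 0 ≤ RR (x/4) := RR_nonneg (by positivity)
  unfold LL
  have e1 : x + x^3/4 ≤ 3/4 + 27/256 := by nlinarith [pow_le_pow_left₀ hx hx2 3]
  have e0 : 0 ≤ x + x^3/4 := by positivity
  nlinarith

-- factorial bound
lemma factorial_ge (i : ℕ) : 6 * 4^i ≤ (i+3).factorial := by
  induction i with
  | zero => simp [Nat.factorial]
  | succ i ih =>
    have : (i+1+3).factorial = (i+4) * (i+3).factorial := rfl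
    rw [this]
    calc 6*4^(i+1) = 4 * (6*4^i) := by ring
      _ ≤ (i+4) * (i+3).factorial := Nat.mul_le_mul (by omega) ih

-- geometric bound
lemma geom_bound (N : ℕ) : ∑ i ∈ range N, ((3:ℚ)/16)^i ≤ 16/13 := by
  have h : ((3:ℚ)/16) ≠ 1 := by norm_num
  rw [geom_sum_eq h]
  have hp : (0:ℚ) ≤ (3/16)^N := by positivity
  rw [div_le_iff_of_neg (by norm_num : (3:ℚ)/16 - 1 < 0)]
  linarith

lemma tail_sum3 {x : ℚ} (hx : 0 ≤ x) (hx2 : x ≤ 3/4) (N : ℕ) :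
    ∑ i ∈ range N, x^(i+3) / (i+3).factorial ≤ x^3/4 := by
  have key : ∀ i : ℕ, x^(i+3)/(i+3).factorial ≤ x^3/6 * (3/16)^i := by
    intro i
    have h1 : x^(i+3) = x^3 * x^i := by ring
    have h2 : x^i ≤ (3/4)^i := pow_le_pow_left₀ hx hx2 i
    have h3 : (6:ℚ) * 4^i ≤ (i+3).factorial := by
      exact_mod_cast Nat.cast_le.mpr (factorial_ge i)
    have hf : (0:ℚ) < (i+3).factorial := by
      have := Nat.factorial_pos (i+3); exact_mod_cast this
    rw [div_le_iff₀ hf, h1]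
    calc x^3 * x^i ≤ x^3 * (3/4)^i := by
          apply mul_le_mul_of_nonneg_left h2 (by positivity)
      _ = x^3/6 * (3/16)^i * (6*4^i) := by
          rw [show ((3:ℚ)/4)^i = (3/16)^i * 4^i by rw [← mul_pow]; norm_num]
          ring
      _ ≤ x^3/6 * (3/16)^i * (i+3).factorial := by
          apply mul_le_mul_of_nonneg_left h3 (by positivity)
  calc ∑ i ∈ range N, x^(i+3)/(i+3).factorial
      ≤ ∑ i ∈ range N, x^3/6 * (3/16)^i := Finset.sum_le_sum (fun i _ => key i)
    _ = x^3/6 * ∑ i ∈ range N, (3/16)^i := by rw [Finset.mul_sum]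
    _ ≤ x^3/6 * (16/13) := by
        apply mul_le_mul_of_nonneg_left (geom_bound N) (by positivity)
    _ ≤ x^3/4 := by nlinarith [pow_nonneg hx 3]


lemma tail_sum2 {x : ℚ} (hx : 0 ≤ x) (hx2 : x ≤ 3/4) (N : ℕ) :
    ∑ i ∈ range N, x^(i+2) / (i+2).factorial ≤ x^2/2 + x^3/4 := by
  cases N with
  | zero => simp only [Finset.range_zero, Finset.sum_empty]; positivity
  | succ N =>
    rw [Finset.sum_range_succ']
    have h0 : x^(0+2)/((0+2).factorial : ℚ) = x^2/2 := by norm_num [Nat.factorial]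
    rw [h0]
    have : ∑ i ∈ range N, x^(i+1+2)/((i+1+2).factorial : ℚ)
        = ∑ i ∈ range N, x^(i+3)/((i+3).factorial : ℚ) := by
      apply Finset.sum_congr rfl; intro i _; norm_num
    rw [this]
    linarith [tail_sum3 hx hx2 N]

/-! ### Q -/

noncomputable def QQ (m k : ℕ) : ℚ :=
  ((k*(k-1)*m : ℕ) : ℚ) / (((m-k+1)*(m-k+2) : ℕ) : ℚ)

lemma QQ_nonneg (m k : ℕ) : 0 ≤ QQ m k := by
  unfold QQ; positivity

lemma QQ_P_pos (m k : ℕ) : (0:ℚ) < (((m-k+1)*(m-k+2) : ℕ) : ℚ) := by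
  have : 0 < (m-k+1)*(m-k+2) := Nat.mul_pos (by omega) (by omega)
  exact_mod_cast this

lemma QQ_le_quarter (m k j : ℕ) (hj1 : 1 ≤ j) (hjk : 2*j ≤ k) :
    QQ m j ≤ QQ m k / 4 := by
  unfold QQ
  rw [div_div]
  rw [div_le_div_iff₀ (QQ_P_pos m j) (by positivity)]
  have key : (j*(j-1)*m) * ((m-k+1)*(m-k+2)*4) ≤ (k*(k-1)*m) * ((m-j+1)*(m-j+2)) := by
    have h1 : 2*j ≤ k := hjk
    have h2 : 2*(j-1) ≤ k-1 := by omega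
    have h3 : m-k+1 ≤ m-j+1 := by omega
    have h4 : m-k+2 ≤ m-j+2 := by omega
    calc (j*(j-1)*m) * ((m-k+1)*(m-k+2)*4)
        = ((2*j)*(2*(j-1))) * (m * ((m-k+1)*(m-k+2))) := by ring
      _ ≤ (k*(k-1)) * (m * ((m-j+1)*(m-j+2))) :=
          Nat.mul_le_mul (Nat.mul_le_mul h1 h2)
            (Nat.mul_le_mul_left m (Nat.mul_le_mul h3 h4))
      _ = (k*(k-1)*m) * ((m-j+1)*(m-j+2)) := by ring
  calc ((j*(j-1)*m : ℕ):ℚ) * (((((m-k+1)*(m-k+2) : ℕ)):ℚ) * 4)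
      = (((j*(j-1)*m) * ((m-k+1)*(m-k+2)*4) : ℕ) : ℚ) := by push_cast; ring
    _ ≤ (((k*(k-1)*m) * ((m-j+1)*(m-j+2)) : ℕ) : ℚ) := by exact_mod_cast key
    _ = ((k*(k-1)*m : ℕ):ℚ) * (((m-j+1)*(m-j+2) : ℕ):ℚ) := by push_cast; ring

lemma r_bound (m k j : ℕ) (hkm : k ≤ m) (hjk : 2*j ≤ k) :
    ((m.choose (k-2*j) : ℕ):ℚ) * ((m.choose j : ℕ):ℚ)
      ≤ ((m.choose k : ℕ):ℚ) * (QQ m k)^j / (j.factorial : ℚ) := by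
  have key := choose_ratio_bound m k hkm j hjk
  have hF : (0:ℚ) < (j.factorial : ℚ) := by exact_mod_cast j.factorial_pos
  have hP := QQ_P_pos m k
  rw [le_div_iff₀ hF]
  unfold QQ
  rw [div_pow, ← mul_div_assoc, le_div_iff₀ (by positivity)]
  have keyQ : ((m.choose (k-2*j) : ℕ):ℚ) * (m.choose j : ℕ) * (j.factorial : ℕ)
      * ((((m-k+1)*(m-k+2) : ℕ)):ℚ)^j
      ≤ ((m.choose k : ℕ):ℚ) * (((k*(k-1)*m : ℕ)):ℚ)^j := by
    push_cast
    exact_mod_cast key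
  linear_combination keyQ

/-! ### main induction -/

lemma main_bound (m : ℕ) : ∀ k, 2*k ≤ m → QQ m k ≤ 3/4 →
    (1 - LL (QQ m k)) * (m.choose k : ℚ) ≤ (sInt m k : ℚ) ∧
    (sInt m k : ℚ) ≤ (1 + RR (QQ m k)) * (m.choose k : ℚ) := by
  intro k
  induction k using Nat.strong_induction_on with
  | _ k ih =>
  intro hk2 hQ
  -- base cases
  rcases Nat.lt_or_ge k 2 with hk | hk
  · have hQ0 : QQ m k = 0 := by
      unfold QQ
      have : k*(k-1)*m = 0 := by
        rcases Nat.lt_or_ge k 1 with h | h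
        · have : k = 0 := by omega
          simp [this]
        · have : k = 1 := by omega
          simp [this]
      rw [this]
      simp
    rw [hQ0]
    rw [show LL 0 = 0 by unfold LL RR; norm_num, show RR 0 = 0 by unfold RR; norm_num]
    interval_cases k
    · simp [sInt_zero]
    · simp [sInt_one, Nat.choose_one_right]
  · -- main case k ≥ 2
    set x := QQ m k with hxdef
    have hx0 : 0 ≤ x := QQ_nonneg m k
    have hkm : k ≤ m := by omega
    set C : ℚ := (m.choose k : ℚ) with hCdef
    have hC0 : (0:ℚ) ≤ C := by positivity
    set ρ : ℚ := RR (x/4) with hρdef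
    have hρ0 : (0:ℚ) ≤ ρ := RR_nonneg (by positivity)
    have hρx : ρ ≤ x := RR_small hx0 hQ
    set J := k/2 with hJdef
    have hJ1 : 1 ≤ J := by omega
    -- inner bounds
    have hIH : ∀ j, 1 ≤ j → j ≤ J → 0 ≤ (sInt m j : ℚ) ∧
        (sInt m j : ℚ) ≤ (1+ρ) * (m.choose j : ℚ) := by
      intro j h1 h2
      have hq4 : QQ m j ≤ x/4 := QQ_le_quarter m k j h1 (by omega)
      have hqj0 : 0 ≤ QQ m j := QQ_nonneg m j
      have hq : QQ m j ≤ 3/4 := le_trans hq4 (by linarith)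
      have hj2m : 2*j ≤ m := by omega
      obtain ⟨hl, hh⟩ := ih j (by omega) hj2m hq
      constructor
      · have hLs : LL (QQ m j) ≤ 1 := LL_small hqj0 (by linarith)
        have : (0:ℚ) ≤ (1 - LL (QQ m j)) * (m.choose j : ℚ) :=
          mul_nonneg (by linarith) (by positivity)
        linarith
      · have hmono : RR (QQ m j) ≤ ρ := by
          rw [hρdef]; exact RR_mono hqj0 hq4
        have hcj : (0:ℚ) ≤ (m.choose j : ℚ) := by positivity
        nlinarith
    -- the recast recurrence
    have hrecZ := sInt_rec m k
    have hrec : (sInt m k : ℚ) =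
        ∑ j ∈ range (J + 1), (-1)^j * ((m.choose (k-2*j) : ℕ):ℚ) * ((sInt m j : ℤ):ℚ) := by
      rw [hJdef]
      exact_mod_cast congrArg (fun z : ℤ => (z:ℚ)) hrecZ
    -- bounds on the terms
    have habs : ∀ j, 1 ≤ j → j ≤ J →
        ((m.choose (k-2*j) : ℕ):ℚ) * ((sInt m j : ℤ):ℚ) ≤ (1+ρ) * C * x^j / (j.factorial : ℚ) := by
      intro j h1 h2
      obtain ⟨hs0, hs1⟩ := hIH j h1 h2
      have hcc : (0:ℚ) ≤ ((m.choose (k-2*j) : ℕ):ℚ) := by positivity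
      have step1 : ((m.choose (k-2*j) : ℕ):ℚ) * ((sInt m j : ℤ):ℚ)
          ≤ (1+ρ) * (((m.choose (k-2*j) : ℕ):ℚ) * ((m.choose j : ℕ):ℚ)) := by
        nlinarith
      have step2 := r_bound m k j hkm (by omega)
      have hF : (0:ℚ) < (j.factorial : ℚ) := by exact_mod_cast j.factorial_pos
      calc ((m.choose (k-2*j) : ℕ):ℚ) * ((sInt m j : ℤ):ℚ)
          ≤ (1+ρ) * (((m.choose (k-2*j) : ℕ):ℚ) * ((m.choose j : ℕ):ℚ)) := step1
        _ ≤ (1+ρ) * (C * x^j / (j.factorial : ℚ)) := by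
            apply mul_le_mul_of_nonneg_left _ (by linarith)
            exact step2
        _ = (1+ρ) * C * x^j / (j.factorial : ℚ) := by ring
    have hpos : ∀ j, 1 ≤ j → j ≤ J →
        (0:ℚ) ≤ ((m.choose (k-2*j) : ℕ):ℚ) * ((sInt m j : ℤ):ℚ) := by
      intro j h1 h2
      exact mul_nonneg (by positivity) (hIH j h1 h2).1
    -- decompose the sum
    set J' := J - 1 with hJ'def
    have hJJ' : J = J' + 1 := by omega
    rw [Finset.sum_range_succ'] at hrec
    rw [hJJ', Finset.sum_range_succ'] at hrec
    -- now hrec : s̄k = (Σ_{i ∈ range J'} f (i+1+1)) + f (0+1) + f 0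
    have hf0 : ((-1:ℚ))^0 * ((m.choose (k-2*0) : ℕ):ℚ) * ((sInt m 0 : ℤ):ℚ) = C := by
      simp [sInt_zero, hCdef]
    have hsgn : ∀ i : ℕ, ((-1:ℚ))^(i+1+1) = (-1)^i := by
      intro i; ring
    -- upper bound for tail
    have htail_up : ∑ i ∈ range J', (-1:ℚ)^(i+1+1) * ((m.choose (k-2*(i+1+1)) : ℕ):ℚ) * ((sInt m (i+1+1) : ℤ):ℚ)
        ≤ (1+ρ) * C * (x^2/2 + x^3/4) := by
      have step : ∀ i ∈ range J', (-1:ℚ)^(i+1+1) * ((m.choose (k-2*(i+1+1)) : ℕ):ℚ) * ((sInt m (i+1+1) : ℤ):ℚ)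
          ≤ (1+ρ) * C * x^(i+2) / ((i+2).factorial : ℚ) := by
        intro i hi
        rw [Finset.mem_range] at hi
        have h1 : 1 ≤ i+1+1 := by omega
        have h2 : i+1+1 ≤ J := by omega
        have hb := habs (i+1+1) h1 h2
        have hp := hpos (i+1+1) h1 h2
        rw [hsgn i]
        have : (i+1+1) = i+2 := by omega
        rw [this] at hb
        rcases Nat.even_or_odd i with he | ho
        · rw [he.neg_one_pow]
          rw [show (i+1+1) = i+2 by omega]
          linarith
        · rw [ho.neg_one_pow]
          have hfp : (0:ℚ) < ((i+2).factorial : ℚ) := by exact_mod_cast (i+2).factorial_pos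
          have : (0:ℚ) ≤ (1+ρ) * C * x^(i+2) / ((i+2).factorial : ℚ) := by positivity
          rw [show (i+1+1) = i+2 by omega]
          nlinarith [hpos (i+2) (by omega) (by omega)]
      calc ∑ i ∈ range J', (-1:ℚ)^(i+1+1) * ((m.choose (k-2*(i+1+1)) : ℕ):ℚ) * ((sInt m (i+1+1) : ℤ):ℚ)
          ≤ ∑ i ∈ range J', (1+ρ) * C * x^(i+2) / ((i+2).factorial : ℚ) :=
            Finset.sum_le_sum step
        _ = (1+ρ) * C * ∑ i ∈ range J', x^(i+2) / ((i+2).factorial : ℚ) := by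
            rw [Finset.mul_sum]; apply Finset.sum_congr rfl; intro i _; ring
        _ ≤ (1+ρ) * C * (x^2/2 + x^3/4) := by
            apply mul_le_mul_of_nonneg_left (tail_sum2 hx0 hQ J')
            positivity
    -- lower bound for tail
    have htail_low : -((1+ρ) * C * (x^3/4)) ≤
        ∑ i ∈ range J', (-1:ℚ)^(i+1+1) * ((m.choose (k-2*(i+1+1)) : ℕ):ℚ) * ((sInt m (i+1+1) : ℤ):ℚ) := by
      have step : ∀ i ∈ range J',
          (if i = 0 then (0:ℚ) else -((1+ρ) * C * x^(i+2) / ((i+2).factorial : ℚ)))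
          ≤ (-1:ℚ)^(i+1+1) * ((m.choose (k-2*(i+1+1)) : ℕ):ℚ) * ((sInt m (i+1+1) : ℤ):ℚ) := by
        intro i hi
        rw [Finset.mem_range] at hi
        have h1 : 1 ≤ i+1+1 := by omega
        have h2 : i+1+1 ≤ J := by omega
        have hb := habs (i+1+1) h1 h2
        have hp := hpos (i+1+1) h1 h2
        rw [hsgn i]
        rcases Nat.eq_zero_or_pos i with rfl | hi0
        · rw [if_pos rfl]
          simpa using hp
        · rw [if_neg (by omega)]
          rw [show (i+1+1) = i+2 by omega] at hb hp ⊢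
          rcases Nat.even_or_odd i with he | ho
          · rw [he.neg_one_pow]
            have : (0:ℚ) ≤ (1+ρ) * C * x^(i+2) / ((i+2).factorial : ℚ) := by positivity
            linarith
          · rw [ho.neg_one_pow]
            linarith
      have sum_if : ∑ i ∈ range J',
          (if i = 0 then (0:ℚ) else -((1+ρ) * C * x^(i+2) / ((i+2).factorial : ℚ)))
          ≥ -((1+ρ) * C * (x^3/4)) := by
        rcases Nat.eq_zero_or_pos J' with hJ'0 | hJ'0
        · rw [hJ'0]
          simp only [Finset.range_zero, Finset.sum_empty, ge_iff_le, neg_nonpos]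
          exact mul_nonneg (mul_nonneg (by linarith) hC0) (by positivity)
        · have hJJ'' : J' = (J'-1) + 1 := by omega
          rw [hJJ'', Finset.sum_range_succ']
          rw [if_pos rfl, add_zero]
          have : ∀ i ∈ range (J'-1),
              (if i+1 = 0 then (0:ℚ) else -((1+ρ) * C * x^(i+1+2) / ((i+1+2).factorial : ℚ)))
              = -((1+ρ) * C * x^(i+3) / ((i+3).factorial : ℚ)) := by
            intro i _
            rw [if_neg (by omega)]
          rw [Finset.sum_congr rfl this]
          have hts := tail_sum3 hx0 hQ (J'-1)
          have : ∑ i ∈ range (J'-1), -((1+ρ) * C * x^(i+3) / ((i+3).factorial : ℚ))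
              = -((1+ρ) * C * ∑ i ∈ range (J'-1), x^(i+3) / ((i+3).factorial : ℚ)) := by
            rw [Finset.mul_sum]
            rw [← Finset.sum_neg_distrib]
            apply Finset.sum_congr rfl; intro i _; ring
          rw [this]
          have h1 : (1+ρ) * C * ∑ i ∈ range (J'-1), x^(i+3) / ((i+3).factorial : ℚ)
              ≤ (1+ρ) * C * (x^3/4) := by
            apply mul_le_mul_of_nonneg_left hts
            positivity
          linarith
      calc -((1+ρ) * C * (x^3/4))
          ≤ ∑ i ∈ range J', (if i = 0 then (0:ℚ) else -((1+ρ) * C * x^(i+2) / ((i+2).factorial : ℚ))) := sum_if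
        _ ≤ _ := Finset.sum_le_sum step
    -- the j = 1 term
    have hf1b := habs 1 le_rfl hJ1
    have hf1p := hpos 1 le_rfl hJ1
    have hfact1 : ((Nat.factorial 1 : ℕ):ℚ) = 1 := by norm_num [Nat.factorial]
    rw [hfact1] at hf1b
    have hf1 : ((-1:ℚ))^(0+1) * ((m.choose (k-2*(0+1)) : ℕ):ℚ) * ((sInt m (0+1) : ℤ):ℚ)
        = -(((m.choose (k-2*1) : ℕ):ℚ) * ((sInt m 1 : ℤ):ℚ)) := by
      norm_num
    rw [hf0, hf1] at hrec
    constructor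
    · -- lower bound
      have hLx : LL x = (x + x^3/4) * (1 + ρ) := by rw [hρdef]; unfold LL; rfl
      rw [hrec, hLx]
      have e1 : -(((m.choose (k-2*1) : ℕ):ℚ) * ((sInt m 1 : ℤ):ℚ)) ≥ -((1+ρ) * C * x^1 / 1) := by
        simp only [pow_one] at hf1b ⊢
        linarith
      nlinarith [htail_low, e1]
    · -- upper bound
      rw [hrec]
      have e1 : -(((m.choose (k-2*1) : ℕ):ℚ) * ((sInt m 1 : ℤ):ℚ)) ≤ 0 := by linarith
      have hRx : (1+ρ) * (x^2/2 + x^3/4) ≤ RR x := by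
        unfold RR
        nlinarith [sq_nonneg x, pow_nonneg hx0 3]
      nlinarith [htail_up, e1]

end Stmt19Aux

open Stmt19Aux PowerSeries in
theorem stmt19 (m : ℕ) (hm : 1 ≤ m) (n : ℕ)
    (h : (n : ℝ) ^ 2 / Real.log 2 < (m : ℝ)) :
    PowerSeries.coeff n (T ^ m) ≠ 0 := by
  have hlog : (0:ℝ) < Real.log 2 := Real.log_pos (by norm_num)
  have h1 : (n:ℝ)^2 < m * Real.log 2 := by
    rw [div_lt_iff₀ hlog] at h
    linarith
  have hm0 : (0:ℝ) < m := by
    have : (0:ℕ) < m := hm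
    exact_mod_cast this
  have h2 : (n:ℝ)^2 * 10^10 < m * 6931471808 := by
    have hd := Real.log_two_lt_d9
    nlinarith [h1, hd, hm0]
  have hNat : n^2 * 10^10 < m * 6931471808 := by exact_mod_cast h2
  rcases Nat.lt_or_ge n 2 with hn | hn
  · interval_cases n
    · rw [coeff_eq_sInt, sInt_zero]
      norm_num
    · rw [coeff_eq_sInt, sInt_one]
      simp only [pow_one, neg_mul, one_mul, ne_eq, neg_eq_zero]
      exact Nat.cast_ne_zero.mpr (by omega)
  · have hZ0 : (n:ℤ)^2 * 10^10 < (m:ℤ) * 6931471808 := by exact_mod_cast hNat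
    have hn20 : (2:ℤ) ≤ (n:ℤ) := by exact_mod_cast hn
    have hnm'' : 2*(n:ℤ) < (m:ℤ) := by nlinarith [hZ0, hn20]
    have hnm' : 2*n < m := by exact_mod_cast hnm''
    have hnm : 2*n ≤ m := by omega
    have hnlem : n ≤ m := by omega
    -- Q m n ≤ 3/4
    have hQ34 : QQ m n ≤ 3/4 := by
      unfold QQ
      rw [div_le_iff₀ (QQ_P_pos m n)]
      have key : 4*(n*(n-1)*m) ≤ 3*((m-n+1)*(m-n+2)) := by
        zify [hnlem, show 1 ≤ n by omega]
        have hZ : (n:ℤ)^2 * 10^10 + 1 ≤ (m:ℤ) * 6931471808 := by exact_mod_cast hNat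
        have hn2 : (2:ℤ) ≤ (n:ℤ) := by exact_mod_cast hn
        have hmZ : (0:ℤ) ≤ (m:ℤ) := by positivity
        have hB : 3*(m:ℤ) ≥ 4*(n:ℤ)^2 + 2*(n:ℤ) - 9 := by
          nlinarith [hZ, sq_nonneg (20*(n:ℤ) - 61), hn2]
        nlinarith [mul_nonneg (sub_nonneg.mpr hB) hmZ,
          mul_nonneg (by linarith : (0:ℤ) ≤ (n:ℤ) - 1) (by linarith : (0:ℤ) ≤ (n:ℤ) - 2)]
      rw [div_mul_eq_mul_div, le_div_iff₀ (by norm_num : (0:ℚ) < 4)]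
      have hc := (Nat.cast_le (α := ℚ)).mpr key
      push_cast at hc ⊢
      linarith
    obtain ⟨hl, _⟩ := main_bound m n hnm hQ34
    have hLf := LL_final (QQ_nonneg m n) hQ34
    have hCpos : (0:ℚ) < (m.choose n : ℚ) := by
      exact_mod_cast Nat.choose_pos hnlem
    have hspos : (0:ℚ) < ((sInt m n : ℤ):ℚ) := by nlinarith [hl, hLf, hCpos]
    have hs0 : sInt m n ≠ 0 := by
      intro hz
      rw [hz] at hspos
      norm_num at hspos
    rw [coeff_eq_sInt]
    exact mul_ne_zero (pow_ne_zero _ (by norm_num)) hs0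
end
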